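/- arXiv:2010.01259 — 5 statements merged into one kernel-verified Lean document; each statement's English description precedes it below -/
import Mathlib

section
/- Let H be a real Hilbert space and let A, B be self-adjoint, positive, invertible bounded linear operators on H. Then for every x ∈ H, the real number (1/2)⟨(A⁻¹ + B⁻¹)⁻¹ x, x⟩ is the greatest lower bound of the set { (1/2)⟨Az, z⟩ + (1/2)⟨B(x − z), x − z⟩ : z ∈ H }; that is, the inf-convolution Q_A □ Q_B equals Q_{A//B}, where A//B = (A⁻¹ + B⁻¹)⁻¹ is the parallel sum of A and B. -/
open scoped RealInnerProductSpace

section Aux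

variable {H : Type*} [NormedAddCommGroup H] [InnerProductSpace ℝ H] [CompleteSpace H]

set_option linter.unusedSectionVars false in
/-- Cauchy–Schwarz for the semi-inner product induced by a positive symmetric operator. -/
theorem aux_cs (A : H →L[ℝ] H) (hsymm : ∀ u v : H, ⟪A u, v⟫ = ⟪u, A v⟫)
    (hpos : ∀ u : H, 0 ≤ ⟪A u, u⟫) (x y : H) :
    ⟪A x, y⟫ ^ 2 ≤ ⟪A x, x⟫ * ⟪A y, y⟫ := by
  have key : ∀ t : ℝ, 0 ≤ ⟪A y, y⟫ * (t * t) + 2 * ⟪A x, y⟫ * t + ⟪A x, x⟫ := by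
    intro t
    have h0 := hpos (x + t • y)
    have hsym2 : ⟪A y, x⟫ = ⟪A x, y⟫ := by rw [hsymm y x, real_inner_comm]
    have e : ⟪A (x + t • y), x + t • y⟫
        = ⟪A y, y⟫ * (t * t) + 2 * ⟪A x, y⟫ * t + ⟪A x, x⟫ := by
      rw [map_add, map_smul, inner_add_left, inner_add_right, inner_add_right,
        real_inner_smul_left, real_inner_smul_left, real_inner_smul_right,
        real_inner_smul_right, hsym2]
      ring
    linarith [e ▸ h0]
  have hd := discrim_le_zero key
  rw [discrim] at hd
  nlinarith [hd]

set_option linter.unusedSectionVars false in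
/-- A symmetric positive invertible operator is coercive. -/
theorem aux_coercive (A : H →L[ℝ] H) (hsymm : ∀ u v : H, ⟪A u, v⟫ = ⟪u, A v⟫)
    (hpos : ∀ u : H, 0 ≤ ⟪A u, u⟫) (hu : IsUnit A) :
    ∃ c : ℝ, 0 < c ∧ ∀ u : H, c * (‖u‖ * ‖u‖) ≤ ⟪A u, u⟫ := by
  obtain ⟨v, hv⟩ := hu
  have hinv : ∀ u : H, (↑v⁻¹ : H →L[ℝ] H) (A u) = u := by
    intro u
    have h1 : (↑v⁻¹ * ↑v : H →L[ℝ] H) = 1 := v.inv_mul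
    rw [hv] at h1
    calc (↑v⁻¹ : H →L[ℝ] H) (A u) = ((↑v⁻¹ * A : H →L[ℝ] H)) u := rfl
    _ = u := by rw [h1]; rfl
  have hb : ∀ u : H, ‖u‖ ≤ ‖(↑v⁻¹ : H →L[ℝ] H)‖ * ‖A u‖ := by
    intro u
    calc ‖u‖ = ‖(↑v⁻¹ : H →L[ℝ] H) (A u)‖ := by rw [hinv u]
    _ ≤ ‖(↑v⁻¹ : H →L[ℝ] H)‖ * ‖A u‖ := (↑v⁻¹ : H →L[ℝ] H).le_opNorm _
  have hAx : ∀ u : H, ‖A u‖ ^ 2 ≤ ‖A‖ * ⟪A u, u⟫ := by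
    intro u
    have cs := aux_cs A hsymm hpos u (A u)
    have h2 : ⟪A (A u), A u⟫ ≤ ‖A‖ * (‖A u‖ * ‖A u‖) := by
      calc ⟪A (A u), A u⟫ ≤ ‖A (A u)‖ * ‖A u‖ := real_inner_le_norm _ _
      _ ≤ (‖A‖ * ‖A u‖) * ‖A u‖ :=
        mul_le_mul_of_nonneg_right (A.le_opNorm _) (norm_nonneg _)
      _ = ‖A‖ * (‖A u‖ * ‖A u‖) := by ring
    have h3 : ⟪A u, A u⟫ = ‖A u‖ ^ 2 := real_inner_self_eq_norm_sq _
    by_cases h0 : ‖A u‖ = 0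
    · rw [h0]
      simpa using mul_nonneg (norm_nonneg A) (hpos u)
    · have h0' : 0 < ‖A u‖ := lt_of_le_of_ne (norm_nonneg _) (Ne.symm h0)
      have h4 := mul_le_mul_of_nonneg_left h2 (hpos u)
      nlinarith [cs, h4, h3, mul_pos h0' h0']
  set K := ‖(↑v⁻¹ : H →L[ℝ] H)‖ ^ 2 * ‖A‖ with hK
  have hK0 : 0 ≤ K := by positivity
  have hxK : ∀ u : H, ‖u‖ ^ 2 ≤ K * ⟪A u, u⟫ := by
    intro u
    nlinarith [hb u, hAx u, norm_nonneg (A u), norm_nonneg u,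
      norm_nonneg (↑v⁻¹ : H →L[ℝ] H), hpos u]
  refine ⟨(K + 1)⁻¹, by positivity, fun u => ?_⟩
  have hK1 : (0:ℝ) < K + 1 := by positivity
  have h5 : (K + 1)⁻¹ * ‖u‖ ^ 2 ≤ (K + 1)⁻¹ * (K * ⟪A u, u⟫) :=
    mul_le_mul_of_nonneg_left (hxK u) (by positivity)
  have h7 : (K + 1)⁻¹ * K ≤ 1 := by
    rw [inv_mul_le_iff₀ hK1]
    linarith
  have h6 : (K + 1)⁻¹ * (K * ⟪A u, u⟫) ≤ ⟪A u, u⟫ := by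
    calc (K + 1)⁻¹ * (K * ⟪A u, u⟫) = ((K + 1)⁻¹ * K) * ⟪A u, u⟫ := by ring
    _ ≤ 1 * ⟪A u, u⟫ := mul_le_mul_of_nonneg_right h7 (hpos u)
    _ = ⟪A u, u⟫ := one_mul _
  have hsq : ‖u‖ * ‖u‖ = ‖u‖ ^ 2 := by ring
  rw [hsq]
  linarith

/-- A coercive bounded operator on a Hilbert space is invertible (Lax–Milgram style). -/
theorem aux_isUnit (T : H →L[ℝ] H)
    (h : ∃ c : ℝ, 0 < c ∧ ∀ u : H, c * (‖u‖ * ‖u‖) ≤ ⟪T u, u⟫) : IsUnit T := by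
  obtain ⟨c, hc, hcoer⟩ := h
  have hbelow : ∀ u : H, c * ‖u‖ ≤ ‖T u‖ := by
    intro u
    by_cases hu : u = 0
    · simp [hu]
    · have hne : 0 < ‖u‖ := norm_pos_iff.mpr hu
      have h1 := hcoer u
      have h2 : ⟪T u, u⟫ ≤ ‖T u‖ * ‖u‖ := real_inner_le_norm _ _
      nlinarith
  have antilip : AntilipschitzWith (c⁻¹).toNNReal T := by
    refine T.antilipschitz_of_bound fun u => ?_
    have hco : ((c⁻¹).toNNReal : ℝ) = c⁻¹ := Real.coe_toNNReal _ (le_of_lt (inv_pos.mpr hc))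
    rw [hco]
    have h1 := hbelow u
    calc ‖u‖ = c⁻¹ * (c * ‖u‖) := by field_simp
    _ ≤ c⁻¹ * ‖T u‖ := mul_le_mul_of_nonneg_left h1 (le_of_lt (inv_pos.mpr hc))
  have hinj : Function.Injective T := antilip.injective
  have hclosed : IsClosed (LinearMap.range (T : H →ₗ[ℝ] H) : Set H) :=
    antilip.isClosed_range T.uniformContinuous
  have hrange : LinearMap.range (T : H →ₗ[ℝ] H) = ⊤ := by
    haveI := hclosed.completeSpace_coe
    rw [← (LinearMap.range (T : H →ₗ[ℝ] H)).orthogonal_orthogonal]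
    rw [Submodule.eq_top_iff']
    intro v w mem_w_orthogonal
    obtain rfl : w = 0 := by
      have h1 : ⟪T w, w⟫ = 0 := mem_w_orthogonal _ ⟨w, rfl⟩
      have h2 := hcoer w
      by_contra hne
      have hp : 0 < ‖w‖ := norm_pos_iff.mpr hne
      nlinarith [mul_pos hc (mul_pos hp hp)]
    exact inner_zero_left _
  have hker : LinearMap.ker (T : H →ₗ[ℝ] H) = ⊥ := LinearMap.ker_eq_bot.mpr hinj
  let e := ContinuousLinearEquiv.ofBijective T hker hrange
  have he : ∀ u : H, T u = e u := fun u => rfl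
  refine ⟨⟨T, (e.symm : H →L[ℝ] H), ?_, ?_⟩, rfl⟩
  · ext u
    show T (e.symm u) = u
    rw [he]
    exact e.apply_symm_apply u
  · ext u
    show e.symm (T u) = u
    rw [he]
    exact e.symm_apply_apply u

end Aux

/-- For self-adjoint, positive, invertible bounded operators `A, B` on a real
Hilbert space, the inf-convolution of the quadratic functionals `Q_A` and `Q_B` equals the
quadratic functional of the parallel sum `A // B = (A⁻¹ + B⁻¹)⁻¹`; i.e. for every `x`,
`(1/2)⟪(A⁻¹ + B⁻¹)⁻¹ x, x⟫` is the greatest lower bound of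
`{ (1/2)⟪A z, z⟫ + (1/2)⟪B (x - z), x - z⟫ : z ∈ H }`. -/
theorem infConvolution_quadratic_eq_parallel_sum
    {H : Type*} [NormedAddCommGroup H] [InnerProductSpace ℝ H] [CompleteSpace H]
    (A B : H →L[ℝ] H) (hA : IsSelfAdjoint A) (hB : IsSelfAdjoint B)
    (hApos : ∀ x : H, 0 ≤ ⟪A x, x⟫) (hBpos : ∀ x : H, 0 ≤ ⟪B x, x⟫)
    (hAinv : IsUnit A) (hBinv : IsUnit B) (x : H) :
    IsGLB
      (Set.range fun z : H => (1 / 2) * ⟪A z, z⟫ + (1 / 2) * ⟪B (x - z), x - z⟫)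
      ((1 / 2) * ⟪(Ring.inverse (Ring.inverse A + Ring.inverse B)) x, x⟫) := by
  classical
  have hAsymm : ∀ u v : H, ⟪A u, v⟫ = ⟪u, A v⟫ := fun u v =>
    (ContinuousLinearMap.isSelfAdjoint_iff_isSymmetric.mp hA) u v
  have hBsymm : ∀ u v : H, ⟪B u, v⟫ = ⟪u, B v⟫ := fun u v =>
    (ContinuousLinearMap.isSelfAdjoint_iff_isSymmetric.mp hB) u v
  set A' := Ring.inverse A with hA'def
  set B' := Ring.inverse B with hB'def
  have hAA' : A * A' = 1 := Ring.mul_inverse_cancel A hAinv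
  have hBB' : B * B' = 1 := Ring.mul_inverse_cancel B hBinv
  have happ : ∀ (f g : H →L[ℝ] H), f * g = 1 → ∀ u : H, f (g u) = u := by
    intro f g hfg u
    have := congrArg (fun F : H →L[ℝ] H => F u) hfg
    simpa using this
  -- positivity and symmetry of the inverses
  have hA'pos : ∀ u : H, 0 ≤ ⟪A' u, u⟫ := by
    intro u
    have h1 : A (A' u) = u := happ _ _ hAA' u
    calc (0:ℝ) ≤ ⟪A (A' u), A' u⟫ := hApos _
    _ = ⟪A' u, A (A' u)⟫ := real_inner_comm _ _
    _ = ⟪A' u, u⟫ := by rw [h1]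
  have hB'pos : ∀ u : H, 0 ≤ ⟪B' u, u⟫ := by
    intro u
    have h1 : B (B' u) = u := happ _ _ hBB' u
    calc (0:ℝ) ≤ ⟪B (B' u), B' u⟫ := hBpos _
    _ = ⟪B' u, B (B' u)⟫ := real_inner_comm _ _
    _ = ⟪B' u, u⟫ := by rw [h1]
  have hA'sa : IsSelfAdjoint A' := by
    show star A' = A'
    rw [hA'def, ← Ring.inverse_star, hA.star_eq]
  have hA'symm : ∀ u v : H, ⟪A' u, v⟫ = ⟪u, A' v⟫ := fun u v =>
    (ContinuousLinearMap.isSelfAdjoint_iff_isSymmetric.mp hA'sa) u v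
  -- the sum of the inverses is invertible
  have hSco : ∃ c : ℝ, 0 < c ∧ ∀ u : H, c * (‖u‖ * ‖u‖) ≤ ⟪(A' + B') u, u⟫ := by
    obtain ⟨c, hc, hco⟩ := aux_coercive A' hA'symm hA'pos (IsUnit.ringInverse hAinv)
    refine ⟨c, hc, fun u => ?_⟩
    have h1 := hco u
    have h2 := hB'pos u
    have h3 : (A' + B') u = A' u + B' u := rfl
    rw [h3, inner_add_left]
    linarith
  have hSunit : IsUnit (A' + B') := aux_isUnit _ hSco
  set C := Ring.inverse (A' + B') with hCdef
  have hSC : (A' + B') * C = 1 := Ring.mul_inverse_cancel _ hSunit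
  -- the minimizer
  set z₀ := A' (C x) with hz₀
  set w₀ := B' (C x) with hw₀
  have hx : x = z₀ + w₀ := by
    have h1 : (A' + B') (C x) = x := happ _ _ hSC x
    have h2 : (A' + B') (C x) = A' (C x) + B' (C x) := rfl
    rw [h2] at h1
    exact h1.symm
  have hAz : A z₀ = C x := happ _ _ hAA' (C x)
  have hBw : B w₀ = C x := happ _ _ hBB' (C x)
  have hv1 : ⟪C x, z₀⟫ = ⟪A z₀, z₀⟫ := by rw [hAz]
  have hv2 : ⟪C x, w₀⟫ = ⟪B w₀, w₀⟫ := by rw [hBw]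
  have hval : ⟪C x, x⟫ = ⟪A z₀, z₀⟫ + ⟪B w₀, w₀⟫ := by
    calc ⟪C x, x⟫ = ⟪C x, z₀ + w₀⟫ := by rw [← hx]
    _ = ⟪C x, z₀⟫ + ⟪C x, w₀⟫ := inner_add_right _ _ _
    _ = ⟪A z₀, z₀⟫ + ⟪B w₀, w₀⟫ := by rw [hv1, hv2]
  have expand : ∀ (P : H →L[ℝ] H), (∀ u v : H, ⟪P u, v⟫ = ⟪u, P v⟫) → ∀ u d : H,
      ⟪P (u + d), u + d⟫ = ⟪P u, u⟫ + 2 * ⟪P u, d⟫ + ⟪P d, d⟫ := by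
    intro P hs u d
    have hcross : ⟪P d, u⟫ = ⟪P u, d⟫ := by rw [hs d u, real_inner_comm]
    rw [map_add, inner_add_left, inner_add_right, inner_add_right, hcross]
    ring
  refine IsLeast.isGLB ⟨⟨z₀, ?_⟩, ?_⟩
  · -- value at the minimizer
    have hw : x - z₀ = w₀ := by rw [hx]; abel
    show (1 / 2) * ⟪A z₀, z₀⟫ + (1 / 2) * ⟪B (x - z₀), x - z₀⟫ = (1 / 2) * ⟪C x, x⟫
    rw [hw, hval]
    ring
  · rintro r ⟨z, rfl⟩
    obtain ⟨d, rfl⟩ : ∃ d : H, z = z₀ + d := ⟨z - z₀, by abel⟩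
    have hxd : x - (z₀ + d) = w₀ + -d := by rw [hx]; abel
    have e1 := expand A hAsymm z₀ d
    have e2 := expand B hBsymm w₀ (-d)
    have en1 : ⟪B w₀, -d⟫ = -⟪B w₀, d⟫ := inner_neg_right _ _
    have en2 : ⟪B (-d), -d⟫ = ⟪B d, d⟫ := by rw [map_neg, inner_neg_neg]
    have hv3 : ⟪A z₀, d⟫ = ⟪B w₀, d⟫ := by rw [hAz, hBw]
    show (1 / 2) * ⟪C x, x⟫ ≤ (1 / 2) * ⟪A (z₀ + d), z₀ + d⟫
        + (1 / 2) * ⟪B (x - (z₀ + d)), x - (z₀ + d)⟫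
    rw [hxd]
    have hpd := hApos d
    have hpd' := hBpos d
    rw [en1, en2] at e2
    linarith [e1, e2]
end

section
/- Let H be a complex Hilbert space, let A, B be positive invertible bounded linear operators on H, and let λ ∈ [0,1]. Then A !_λ B ≤ A ♯_λ B ≤ A ∇_λ B in the Loewner order, where A ∇_λ B = (1−λ)A + λB, A !_λ B = ((1−λ)A⁻¹ + λB⁻¹)⁻¹, and A ♯_λ B = A^{1/2} (A^{−1/2} B A^{−1/2})^λ A^{1/2}. -/
/-- The real power `A^r` of a bounded operator on a complex Hilbert space, via the continuous
functional calculus with the real function `x ↦ x ^ r`. -/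
noncomputable def opRpow {H : Type*} [NormedAddCommGroup H] [InnerProductSpace ℂ H]
    [CompleteSpace H] (A : H →L[ℂ] H) (r : ℝ) : H →L[ℂ] H :=
  cfc (fun x : ℝ => x ^ r) A

/-- The `λ`-weighted operator arithmetic mean `(1-λ)A + λB`. -/
noncomputable def opArith {H : Type*} [NormedAddCommGroup H] [InnerProductSpace ℂ H]
    [CompleteSpace H] (A B : H →L[ℂ] H) (l : ℝ) : H →L[ℂ] H :=
  (1 - l) • A + l • B

/-- The `λ`-weighted operator harmonic mean `((1-λ)A⁻¹ + λB⁻¹)⁻¹`. -/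
noncomputable def opHarm {H : Type*} [NormedAddCommGroup H] [InnerProductSpace ℂ H]
    [CompleteSpace H] (A B : H →L[ℂ] H) (l : ℝ) : H →L[ℂ] H :=
  Ring.inverse ((1 - l) • Ring.inverse A + l • Ring.inverse B)

/-- The `λ`-weighted operator geometric mean `A^{1/2} (A^{-1/2} B A^{-1/2})^λ A^{1/2}`. -/
noncomputable def opGeom {H : Type*} [NormedAddCommGroup H] [InnerProductSpace ℂ H]
    [CompleteSpace H] (A B : H →L[ℂ] H) (l : ℝ) : H →L[ℂ] H :=
  opRpow A (1 / 2) * opRpow (opRpow A (-(1 / 2)) * B * opRpow A (-(1 / 2))) l *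
    opRpow A (1 / 2)

private lemma aux_contOn_rpow {s : Set ℝ} (hs : ∀ x ∈ s, 0 < x) (r : ℝ) :
    ContinuousOn (fun x : ℝ => x ^ r) s := fun x hx =>
  (Real.continuousAt_rpow_const x r (Or.inl (hs x hx).ne')).continuousWithinAt

private lemma aux_contOn_inv {s : Set ℝ} (hs : ∀ x ∈ s, 0 < x) :
    ContinuousOn (fun x : ℝ => x⁻¹) s :=
  ContinuousOn.inv₀ continuousOn_id fun x hx => (hs x hx).ne'

/-- Scalar weighted AM-GM: `x ^ l ≤ (1-l) + l*x` for `x > 0`, `l ∈ [0,1]`. -/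
private lemma aux_scalar_GA {l : ℝ} (hl0 : 0 ≤ l) (hl1 : l ≤ 1) {x : ℝ} (hx : 0 < x) :
    x ^ l ≤ (1 - l) + l * x := by
  have := Real.geom_mean_le_arith_mean2_weighted (sub_nonneg.mpr hl1) hl0
    zero_le_one hx.le (by ring)
  simpa using this

private lemma aux_scalar_d_pos {l : ℝ} (hl0 : 0 ≤ l) (hl1 : l ≤ 1) {x : ℝ} (hx : 0 < x) :
    0 < (1 - l) + l * x⁻¹ := by
  rcases eq_or_lt_of_le hl1 with h1 | h1
  · subst h1
    simpa using inv_pos.mpr hx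
  · exact add_pos_of_pos_of_nonneg (sub_pos.mpr h1)
      (mul_nonneg hl0 (inv_pos.mpr hx).le)

/-- Scalar weighted HM-GM: `((1-l) + l*x⁻¹)⁻¹ ≤ x ^ l` for `x > 0`, `l ∈ [0,1]`. -/
private lemma aux_scalar_HG {l : ℝ} (hl0 : 0 ≤ l) (hl1 : l ≤ 1) {x : ℝ} (hx : 0 < x) :
    ((1 - l) + l * x⁻¹)⁻¹ ≤ x ^ l := by
  have h1 := aux_scalar_GA hl0 hl1 (inv_pos.mpr hx)
  rw [Real.inv_rpow hx.le] at h1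
  have h2 : 0 < x ^ l := Real.rpow_pos_of_pos hx l
  calc ((1 - l) + l * x⁻¹)⁻¹ ≤ ((x ^ l)⁻¹)⁻¹ :=
        inv_anti₀ (inv_pos.mpr h2) h1
    _ = x ^ l := inv_inv _

/-- The key abstract computation: with `S = A^{1/2}`, `T = A^{-1/2}` and `C = T B T`, both
differences `geom - harm` and `arith - geom` are nonnegative. -/
private lemma aux_key {H : Type*} [NormedAddCommGroup H] [InnerProductSpace ℂ H]
    [CompleteSpace H] (A B S T : H →L[ℂ] H)
    (hB0 : (0 : H →L[ℂ] H) ≤ B) (hBu : IsUnit B)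
    (hS_sa : IsSelfAdjoint S) (hT_sa : IsSelfAdjoint T)
    (hST : S * T = 1) (hTS : T * S = 1) (hSS : S * S = A)
    (l : ℝ) (hl0 : 0 ≤ l) (hl1 : l ≤ 1) :
    (0 : H →L[ℂ] H) ≤ S * cfc (fun x : ℝ => x ^ l) (T * B * T) * S -
        Ring.inverse ((1 - l) • Ring.inverse A + l • Ring.inverse B) ∧
    (0 : H →L[ℂ] H) ≤ (1 - l) • A + l • B -
        S * cfc (fun x : ℝ => x ^ l) (T * B * T) * S := by
  set C := T * B * T with hCdef
  have hTu : IsUnit T := ⟨⟨T, S, hTS, hST⟩, rfl⟩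
  have hC0 : (0 : H →L[ℂ] H) ≤ C := by
    have := star_left_conjugate_nonneg hB0 T
    rwa [hT_sa.star_eq] at this
  have hC_sa : IsSelfAdjoint C := .of_nonneg hC0
  have hCu : IsUnit C := (hTu.mul hBu).mul hTu
  have hsC : ∀ x ∈ spectrum ℝ C, 0 < x := fun x hx =>
    lt_of_le_of_ne (spectrum_nonneg_of_nonneg hC0 hx)
      (by rintro rfl; exact spectrum.zero_notMem ℝ hCu hx)
  -- cancellation lemmas for `S` and `T`
  have hST' : ∀ z : H →L[ℂ] H, S * (T * z) = z := fun z => by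
    rw [← mul_assoc, hST, one_mul]
  have hTS' : ∀ z : H →L[ℂ] H, T * (S * z) = z := fun z => by
    rw [← mul_assoc, hTS, one_mul]
  have hSCS : S * C * S = B := by
    rw [hCdef]
    simp only [mul_assoc, hST, hTS, hST', hTS', one_mul, mul_one]
  -- the scalar functions
  have hcg : ContinuousOn (fun x : ℝ => x ^ l) (spectrum ℝ C) := aux_contOn_rpow hsC l
  have hcv : ContinuousOn (fun x : ℝ => x⁻¹) (spectrum ℝ C) := aux_contOn_inv hsC
  have hch : ContinuousOn (fun x : ℝ => (1 - l) + l * x) (spectrum ℝ C) := by fun_prop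
  have hcd : ContinuousOn (fun x : ℝ => (1 - l) + l * x⁻¹) (spectrum ℝ C) :=
    continuousOn_const.add (continuousOn_const.mul hcv)
  have hcf : ContinuousOn (fun x : ℝ => ((1 - l) + l * x⁻¹)⁻¹) (spectrum ℝ C) :=
    hcd.inv₀ fun x hx => (aux_scalar_d_pos hl0 hl1 (hsC x hx)).ne'
  -- products of cfc's
  have hpair : ∀ f g : ℝ → ℝ, ContinuousOn f (spectrum ℝ C) → ContinuousOn g (spectrum ℝ C) →
      (∀ x ∈ spectrum ℝ C, f x * g x = 1) → cfc f C * cfc g C = 1 := by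
    intro f g hf hg h1
    rw [← cfc_mul f g C hf hg]
    calc cfc (fun x => f x * g x) C = cfc (1 : ℝ → ℝ) C := cfc_congr h1
      _ = 1 := cfc_one ℝ C
  set Xv := cfc (fun x : ℝ => x⁻¹) C with hXv
  set Dd := cfc (fun x : ℝ => (1 - l) + l * x⁻¹) C with hDd
  set Ff := cfc (fun x : ℝ => ((1 - l) + l * x⁻¹)⁻¹) C with hFf
  set Gg := cfc (fun x : ℝ => x ^ l) C with hGg
  have hCv : C * Xv = 1 := by
    have := hpair (fun x : ℝ => x) _ continuousOn_id hcv fun x hx => mul_inv_cancel₀ (hsC x hx).ne'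
    rwa [cfc_id' ℝ C hC_sa] at this
  have hvC : Xv * C = 1 := by
    have := hpair _ (fun x : ℝ => x) hcv continuousOn_id fun x hx => inv_mul_cancel₀ (hsC x hx).ne'
    rwa [cfc_id' ℝ C hC_sa] at this
  have hfd : Ff * Dd = 1 :=
    hpair _ _ hcf hcd fun x hx => inv_mul_cancel₀ (aux_scalar_d_pos hl0 hl1 (hsC x hx)).ne'
  have hdf : Dd * Ff = 1 :=
    hpair _ _ hcd hcf fun x hx => mul_inv_cancel₀ (aux_scalar_d_pos hl0 hl1 (hsC x hx)).ne'
  have hCv' : ∀ z : H →L[ℂ] H, C * (Xv * z) = z := fun z => by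
    rw [← mul_assoc, hCv, one_mul]
  have hvC' : ∀ z : H →L[ℂ] H, Xv * (C * z) = z := fun z => by
    rw [← mul_assoc, hvC, one_mul]
  have hfd' : ∀ z : H →L[ℂ] H, Ff * (Dd * z) = z := fun z => by
    rw [← mul_assoc, hfd, one_mul]
  have hdf' : ∀ z : H →L[ℂ] H, Dd * (Ff * z) = z := fun z => by
    rw [← mul_assoc, hdf, one_mul]
  -- decomposition of affine cfc's
  have hdec : ∀ u : ℝ → ℝ, ContinuousOn u (spectrum ℝ C) →
      cfc (fun x : ℝ => (1 - l) + l * u x) C = (1 - l) • 1 + l • cfc u C := by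
    intro u hu
    calc cfc (fun x : ℝ => (1 - l) + l * u x) C
        = cfc (fun x : ℝ => (fun _ : ℝ => (1 - l)) x + (fun y : ℝ => l • u y) x) C := by
          apply cfc_congr
          intro x hx
          simp [smul_eq_mul]
      _ = cfc (fun _ : ℝ => (1 - l)) C + cfc (fun y : ℝ => l • u y) C := by
          apply cfc_add C _ _ continuousOn_const (hu.const_smul l)
      _ = (1 - l) • 1 + l • cfc u C := by
          rw [cfc_const _ _ hC_sa, cfc_smul l u C hu, Algebra.algebraMap_eq_smul_one]
  have Hh : cfc (fun x : ℝ => (1 - l) + l * x) C = (1 - l) • 1 + l • C := by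
    have := hdec (fun x : ℝ => x) continuousOn_id
    rwa [cfc_id' ℝ C hC_sa] at this
  have Hd : Dd = (1 - l) • 1 + l • Xv := hdec _ hcv
  have hsand : ∀ P X : H →L[ℂ] H,
      P * ((1 - l) • 1 + l • X) * P = (1 - l) • (P * P) + l • (P * X * P) := by
    intro P X
    simp only [mul_add, add_mul, mul_smul_comm, smul_mul_assoc, mul_one]
  -- the arithmetic mean
  have harith : (1 - l) • A + l • B = S * cfc (fun x : ℝ => (1 - l) + l * x) C * S := by
    rw [Hh, hsand, hSS, hSCS]
  -- the harmonic mean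
  have invA : Ring.inverse A = T * T := by
    have h1 : A * (T * T) = 1 := by
      rw [← hSS]; simp only [mul_assoc, hST, hTS, hST', hTS', one_mul, mul_one]
    have h2 : (T * T) * A = 1 := by
      rw [← hSS]; simp only [mul_assoc, hST, hTS, hST', hTS', one_mul, mul_one]
    exact Ring.inverse_unit ⟨A, T * T, h1, h2⟩
  have invB : Ring.inverse B = T * Xv * T := by
    have h1 : B * (T * Xv * T) = 1 := by
      conv_lhs => rw [← hSCS]
      simp only [mul_assoc, hST, hTS, hST', hTS', hCv, hvC, hCv', hvC', one_mul, mul_one]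
    have h2 : (T * Xv * T) * B = 1 := by
      conv_lhs => rw [← hSCS]
      simp only [mul_assoc, hST, hTS, hST', hTS', hCv, hvC, hCv', hvC', one_mul, mul_one]
    exact Ring.inverse_unit ⟨B, T * Xv * T, h1, h2⟩
  have hharm : Ring.inverse ((1 - l) • Ring.inverse A + l • Ring.inverse B) = S * Ff * S := by
    rw [invA, invB]
    have hDD : (1 - l) • (T * T) + l • (T * Xv * T) = T * Dd * T := by
      rw [Hd, hsand]
    rw [hDD]
    have h1 : (T * Dd * T) * (S * Ff * S) = 1 := by
      simp only [mul_assoc, hST, hTS, hST', hTS', hfd, hdf, hfd', hdf', one_mul, mul_one]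
    have h2 : (S * Ff * S) * (T * Dd * T) = 1 := by
      simp only [mul_assoc, hST, hTS, hST', hTS', hfd, hdf, hfd', hdf', one_mul, mul_one]
    exact Ring.inverse_unit ⟨T * Dd * T, S * Ff * S, h1, h2⟩
  -- order comparisons
  have ineq1 : Ff ≤ Gg :=
    cfc_mono (fun x hx => aux_scalar_HG hl0 hl1 (hsC x hx)) hcf hcg
  have ineq2 : Gg ≤ cfc (fun x : ℝ => (1 - l) + l * x) C :=
    cfc_mono (fun x hx => aux_scalar_GA hl0 hl1 (hsC x hx)) hcg hch
  have conj : ∀ {X Y : H →L[ℂ] H}, X ≤ Y → (0 : H →L[ℂ] H) ≤ S * Y * S - S * X * S := by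
    intro X Y hXY
    have h0 : (0 : H →L[ℂ] H) ≤ Y - X := sub_nonneg.mpr hXY
    have h1 := star_left_conjugate_nonneg h0 S
    rw [hS_sa.star_eq] at h1
    calc (0 : H →L[ℂ] H) ≤ S * (Y - X) * S := h1
      _ = S * Y * S - S * X * S := by rw [mul_sub, sub_mul]
  exact ⟨hharm ▸ conj ineq1, harith ▸ conj ineq2⟩

/-- Harmonic–geometric–arithmetic mean inequalities in the Loewner order:
`A !_λ B ≤ A ♯_λ B ≤ A ∇_λ B` for positive invertible operators `A, B` and `λ ∈ [0,1]`. -/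
theorem harm_le_geom_le_arith_operator
    {H : Type*} [NormedAddCommGroup H] [InnerProductSpace ℂ H] [CompleteSpace H]
    (A B : H →L[ℂ] H)
    (hA : A.IsPositive) (hAinv : IsUnit A)
    (hB : B.IsPositive) (hBinv : IsUnit B)
    (l : ℝ) (hl : l ∈ Set.Icc (0 : ℝ) 1) :
    (opGeom A B l - opHarm A B l).IsPositive ∧
      (opArith A B l - opGeom A B l).IsPositive := by
  obtain ⟨hl0, hl1⟩ := hl
  have hA0 : (0 : H →L[ℂ] H) ≤ A := A.nonneg_iff_isPositive.mpr hA
  have hB0 : (0 : H →L[ℂ] H) ≤ B := B.nonneg_iff_isPositive.mpr hB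
  have hsA : ∀ x ∈ spectrum ℝ A, 0 < x := fun x hx =>
    lt_of_le_of_ne (spectrum_nonneg_of_nonneg hA0 hx)
      (by rintro rfl; exact spectrum.zero_notMem ℝ hAinv hx)
  have hA_sa : IsSelfAdjoint A := hA.isSelfAdjoint
  have hrmul : ∀ r s : ℝ, opRpow A r * opRpow A s = cfc (fun x : ℝ => x ^ (r + s)) A := by
    intro r s
    show cfc _ A * cfc _ A = _
    rw [← cfc_mul _ _ A (aux_contOn_rpow hsA r) (aux_contOn_rpow hsA s)]
    refine cfc_congr fun x hx => ?_
    show x ^ r * x ^ s = x ^ (r + s)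
    rw [← Real.rpow_add (hsA x hx)]
  have hST : opRpow A (1 / 2) * opRpow A (-(1 / 2)) = 1 := by
    rw [hrmul]
    have h0 : (1 : ℝ) / 2 + -(1 / 2) = 0 := by norm_num
    rw [h0]
    calc cfc (fun x : ℝ => x ^ (0 : ℝ)) A = cfc (1 : ℝ → ℝ) A :=
          cfc_congr fun x _ => Real.rpow_zero x
      _ = 1 := cfc_one ℝ A
  have hTS : opRpow A (-(1 / 2)) * opRpow A (1 / 2) = 1 := by
    rw [hrmul]
    have h0 : -((1 : ℝ) / 2) + 1 / 2 = 0 := by norm_num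
    rw [h0]
    calc cfc (fun x : ℝ => x ^ (0 : ℝ)) A = cfc (1 : ℝ → ℝ) A :=
          cfc_congr fun x _ => Real.rpow_zero x
      _ = 1 := cfc_one ℝ A
  have hSS : opRpow A (1 / 2) * opRpow A (1 / 2) = A := by
    rw [hrmul]
    have h0 : (1 : ℝ) / 2 + 1 / 2 = 1 := by norm_num
    rw [h0]
    calc cfc (fun x : ℝ => x ^ (1 : ℝ)) A = cfc (fun x : ℝ => x) A :=
          cfc_congr fun x _ => Real.rpow_one x
      _ = A := cfc_id' ℝ A hA_sa
  have hS_sa : IsSelfAdjoint (opRpow A (1 / 2)) := cfc_predicate _ A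
  have hT_sa : IsSelfAdjoint (opRpow A (-(1 / 2))) := cfc_predicate _ A
  have key := aux_key A B (opRpow A (1 / 2)) (opRpow A (-(1 / 2))) hB0 hBinv
    hS_sa hT_sa hST hTS hSS l hl0 hl1
  exact ⟨(ContinuousLinearMap.nonneg_iff_isPositive _).mp key.1,
    (ContinuousLinearMap.nonneg_iff_isPositive _).mp key.2⟩
end

section
/- Let E be a real normed vector space, let λ, t ∈ (0,1), and let f₁, g₁, f₂, g₂ : E → ℝ be convex continuous functions such that for every φ ∈ E* each of the sets {φ(u) − f₁(u) : u ∈ E}, {φ(u) − g₁(u) : u ∈ E}, {φ(u) − f₂(u) : u ∈ E}, {φ(u) − g₂(u) : u ∈ E} is bounded above. Then for every x ∈ E, (((1−t)f₁ + t f₂) !_λ ((1−t)g₁ + t g₂))(x) ≥ (1−t)(f₁ !_λ g₁)(x) + t(f₂ !_λ g₂)(x), and the same inequality holds with ♯_λ in place of !_λ; that is, the weighted functional harmonic and geometric means are pointwise concave as maps of the pair (f, g). -/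
open Real Set MeasureTheory intervalIntegral



/-- The `t`-weighted functional harmonic mean of `f,g : E → ℝ`, evaluated at `x`. -/
noncomputable def funHarm {E : Type*} [NormedAddCommGroup E] [NormedSpace ℝ E]
    (f g : E → ℝ) (t : ℝ) (x : E) : ℝ :=
  sSup { r : ℝ | ∃ φ : E →L[ℝ] ℝ, ∃ c₁ c₂ : ℝ,
    (∀ u : E, φ u - f u ≤ c₁) ∧ (∀ u : E, φ u - g u ≤ c₂) ∧
    r = φ x - (1 - t) * c₁ - t * c₂ }

/-- The `λ`-weighted functional geometric mean of `f,g : E → ℝ`, evaluated at `x`. -/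
noncomputable def funGeom {E : Type*} [NormedAddCommGroup E] [NormedSpace ℝ E]
    (f g : E → ℝ) (l : ℝ) (x : E) : ℝ :=
  (Real.sin (π * l) / π) *
    ∫ t in (0 : ℝ)..1, t ^ (l - 1) * (1 - t) ^ (-l) * funHarm f g t x

section aux

variable {E : Type*} [NormedAddCommGroup E] [NormedSpace ℝ E]

/-- The defining set of `funHarm`. -/
def harmSet (f g : E → ℝ) (s : ℝ) (x : E) : Set ℝ :=
  { r : ℝ | ∃ φ : E →L[ℝ] ℝ, ∃ c₁ c₂ : ℝ,
    (∀ u : E, φ u - f u ≤ c₁) ∧ (∀ u : E, φ u - g u ≤ c₂) ∧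
    r = φ x - (1 - s) * c₁ - s * c₂ }

lemma harmSet_nonempty (f g : E → ℝ) (s : ℝ) (x : E)
    (hbf : BddAbove (Set.range fun u : E => (0 : E →L[ℝ] ℝ) u - f u))
    (hbg : BddAbove (Set.range fun u : E => (0 : E →L[ℝ] ℝ) u - g u)) :
    (harmSet f g s x).Nonempty := by
  obtain ⟨c₁, hc₁⟩ := hbf
  obtain ⟨c₂, hc₂⟩ := hbg
  exact ⟨_, 0, c₁, c₂, fun u => hc₁ (Set.mem_range_self u),
    fun u => hc₂ (Set.mem_range_self u), rfl⟩

lemma harmSet_le (f g : E → ℝ) {s : ℝ} (hs : s ∈ Icc (0:ℝ) 1) (x : E)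
    {r : ℝ} (hr : r ∈ harmSet f g s x) : r ≤ (1 - s) * f x + s * g x := by
  obtain ⟨φ, c₁, c₂, h₁, h₂, rfl⟩ := hr
  have e1 : φ x - c₁ ≤ f x := by linarith [h₁ x]
  have e2 : φ x - c₂ ≤ g x := by linarith [h₂ x]
  have hs0 : (0:ℝ) ≤ 1 - s := by linarith [hs.2]
  nlinarith [mul_le_mul_of_nonneg_left e1 hs0, mul_le_mul_of_nonneg_left e2 hs.1]

lemma harmSet_bddAbove (f g : E → ℝ) {s : ℝ} (hs : s ∈ Icc (0:ℝ) 1) (x : E) :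
    BddAbove (harmSet f g s x) :=
  ⟨(1 - s) * f x + s * g x, fun _ hr => harmSet_le f g hs x hr⟩

lemma funHarm_eq (f g : E → ℝ) (s : ℝ) (x : E) :
    funHarm f g s x = sSup (harmSet f g s x) := rfl

/-- Uniform bound for `funHarm` in the weight variable. -/
lemma funHarm_abs_bound (f g : E → ℝ) (x : E)
    (hbf : BddAbove (Set.range fun u : E => (0 : E →L[ℝ] ℝ) u - f u))
    (hbg : BddAbove (Set.range fun u : E => (0 : E →L[ℝ] ℝ) u - g u)) :
    ∃ C : ℝ, ∀ s ∈ Icc (0:ℝ) 1, |funHarm f g s x| ≤ C := by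
  obtain ⟨c₁, hc₁⟩ := hbf
  obtain ⟨c₂, hc₂⟩ := hbg
  refine ⟨max (|f x| + |g x|) (|c₁| + |c₂|), fun s hs => abs_le.2 ⟨?_, ?_⟩⟩
  · have hmem : (0 : E →L[ℝ] ℝ) x - (1 - s) * c₁ - s * c₂ ∈ harmSet f g s x :=
      ⟨0, c₁, c₂, fun u => hc₁ (Set.mem_range_self u), fun u => hc₂ (Set.mem_range_self u), rfl⟩
    have h := le_csSup (harmSet_bddAbove f g hs x) hmem
    rw [funHarm_eq]
    have h1 : (1 - s) * c₁ ≤ |c₁| := by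
      rcases le_or_gt 0 c₁ with h' | h'
      · nlinarith [hs.1, hs.2, abs_of_nonneg h']
      · nlinarith [hs.1, hs.2, abs_of_neg h']
    have h2 : s * c₂ ≤ |c₂| := by
      rcases le_or_gt 0 c₂ with h' | h'
      · nlinarith [hs.1, hs.2, abs_of_nonneg h']
      · nlinarith [hs.1, hs.2, abs_of_neg h']
    have : -(|c₁| + |c₂|) ≤ sSup (harmSet f g s x) := by
      simp only [ContinuousLinearMap.zero_apply] at h; linarith
    exact le_trans (neg_le_neg (le_max_right _ _)) this
  · have h := csSup_le (harmSet_nonempty f g s x ⟨c₁, hc₁⟩ ⟨c₂, hc₂⟩)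
      (fun r hr => harmSet_le f g hs x hr)
    rw [funHarm_eq]
    have h1 : (1 - s) * f x ≤ |f x| := by
      rcases le_or_gt 0 (f x) with h' | h'
      · nlinarith [hs.1, hs.2, abs_of_nonneg h']
      · nlinarith [hs.1, hs.2, abs_of_neg h']
    have h2 : s * g x ≤ |g x| := by
      rcases le_or_gt 0 (g x) with h' | h'
      · nlinarith [hs.1, hs.2, abs_of_nonneg h']
      · nlinarith [hs.1, hs.2, abs_of_neg h']
    have : sSup (harmSet f g s x) ≤ |f x| + |g x| := by linarith
    exact this.trans (le_max_left _ _)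

/-- `funHarm` is convex in the weight variable on `[0,1]`. -/
lemma funHarm_convexOn (f g : E → ℝ) (x : E)
    (hbf : BddAbove (Set.range fun u : E => (0 : E →L[ℝ] ℝ) u - f u))
    (hbg : BddAbove (Set.range fun u : E => (0 : E →L[ℝ] ℝ) u - g u)) :
    ConvexOn ℝ (Icc (0:ℝ) 1) (fun s => funHarm f g s x) := by
  refine ⟨convex_Icc 0 1, fun s hs r hr a b ha hb hab => ?_⟩
  have hmem : a • s + b • r ∈ Icc (0:ℝ) 1 := (convex_Icc 0 1) hs hr ha hb hab
  dsimp only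
  rw [funHarm_eq]
  refine csSup_le (harmSet_nonempty f g _ x hbf hbg) ?_
  rintro ρ ⟨φ, c₁, c₂, h₁, h₂, rfl⟩
  have m₁ : φ x - (1 - s) * c₁ - s * c₂ ∈ harmSet f g s x := ⟨φ, c₁, c₂, h₁, h₂, rfl⟩
  have m₂ : φ x - (1 - r) * c₁ - r * c₂ ∈ harmSet f g r x := ⟨φ, c₁, c₂, h₁, h₂, rfl⟩
  have l₁ : φ x - (1 - s) * c₁ - s * c₂ ≤ funHarm f g s x :=
    le_csSup (harmSet_bddAbove f g hs x) m₁
  have l₂ : φ x - (1 - r) * c₁ - r * c₂ ≤ funHarm f g r x :=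
    le_csSup (harmSet_bddAbove f g hr x) m₂
  have := add_le_add (mul_le_mul_of_nonneg_left l₁ ha) (mul_le_mul_of_nonneg_left l₂ hb)
  simp only [smul_eq_mul] at *
  have heq : φ x - (1 - (a*s+b*r)) * c₁ - (a*s+b*r) * c₂ =
      a * (φ x - (1 - s) * c₁ - s * c₂) + b * (φ x - (1 - r) * c₁ - r * c₂) := by
    linear_combination (c₁ - φ x) * hab
  rw [heq]
  exact this

/-- Combining suprema over convex combinations of sets. -/
lemma sSup_comb {S₁ S₂ S₃ : Set ℝ} (h₁ : S₁.Nonempty) (h₂ : S₂.Nonempty)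
    (h₃ : BddAbove S₃) {a b : ℝ} (ha : 0 < a) (hb : 0 < b)
    (hmem : ∀ r₁ ∈ S₁, ∀ r₂ ∈ S₂, a * r₁ + b * r₂ ∈ S₃) :
    a * sSup S₁ + b * sSup S₂ ≤ sSup S₃ := by
  have step1 : ∀ r₂ ∈ S₂, a * sSup S₁ + b * r₂ ≤ sSup S₃ := by
    intro r₂ hr₂
    have h : sSup S₁ ≤ (sSup S₃ - b * r₂) / a := by
      refine csSup_le h₁ fun r₁ hr₁ => ?_
      rw [le_div_iff₀ ha]
      have := le_csSup h₃ (hmem r₁ hr₁ r₂ hr₂)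
      nlinarith
    nlinarith [(le_div_iff₀ ha).mp h]
  have h : sSup S₂ ≤ (sSup S₃ - a * sSup S₁) / b := by
    refine csSup_le h₂ fun r₂ hr₂ => ?_
    rw [le_div_iff₀ hb]
    nlinarith [step1 r₂ hr₂]
  nlinarith [(le_div_iff₀ hb).mp h]

/-- The harmonic mean concavity, for any weight `s ∈ [0,1]`. -/
lemma funHarm_comb (f₁ g₁ f₂ g₂ : E → ℝ) {s t : ℝ} (hs : s ∈ Icc (0:ℝ) 1)
    (ht : t ∈ Ioo (0:ℝ) 1) (x : E)
    (hbf₁ : BddAbove (Set.range fun u : E => (0 : E →L[ℝ] ℝ) u - f₁ u))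
    (hbg₁ : BddAbove (Set.range fun u : E => (0 : E →L[ℝ] ℝ) u - g₁ u))
    (hbf₂ : BddAbove (Set.range fun u : E => (0 : E →L[ℝ] ℝ) u - f₂ u))
    (hbg₂ : BddAbove (Set.range fun u : E => (0 : E →L[ℝ] ℝ) u - g₂ u)) :
    (1 - t) * funHarm f₁ g₁ s x + t * funHarm f₂ g₂ s x ≤
      funHarm (fun u => (1 - t) * f₁ u + t * f₂ u)
        (fun u => (1 - t) * g₁ u + t * g₂ u) s x := by
  rw [funHarm_eq, funHarm_eq, funHarm_eq]
  refine sSup_comb (harmSet_nonempty f₁ g₁ s x hbf₁ hbg₁)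
    (harmSet_nonempty f₂ g₂ s x hbf₂ hbg₂)
    (harmSet_bddAbove _ _ hs x) (by linarith [ht.2]) ht.1 ?_
  rintro r₁ ⟨φ₁, c₁, c₂, hc₁, hc₂, rfl⟩ r₂ ⟨φ₂, d₁, d₂, hd₁, hd₂, rfl⟩
  refine ⟨(1 - t) • φ₁ + t • φ₂, (1 - t) * c₁ + t * d₁, (1 - t) * c₂ + t * d₂, ?_, ?_, ?_⟩
  · intro u
    have h1 := mul_le_mul_of_nonneg_left (hc₁ u) (by linarith [ht.2] : (0:ℝ) ≤ 1 - t)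
    have h2 := mul_le_mul_of_nonneg_left (hd₁ u) ht.1.le
    simp only [ContinuousLinearMap.add_apply, ContinuousLinearMap.coe_smul',
      Pi.smul_apply, smul_eq_mul]
    nlinarith [h1, h2]
  · intro u
    have h1 := mul_le_mul_of_nonneg_left (hc₂ u) (by linarith [ht.2] : (0:ℝ) ≤ 1 - t)
    have h2 := mul_le_mul_of_nonneg_left (hd₂ u) ht.1.le
    simp only [ContinuousLinearMap.add_apply, ContinuousLinearMap.coe_smul',
      Pi.smul_apply, smul_eq_mul]
    nlinarith [h1, h2]
  · simp only [ContinuousLinearMap.add_apply, ContinuousLinearMap.coe_smul',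
      Pi.smul_apply, smul_eq_mul]
    ring

/-- Beta-type integrability. -/
lemma beta_intervalIntegrable {a b : ℝ} (ha : -1 < a) (hb : -1 < b) :
    IntervalIntegrable (fun t : ℝ => t ^ a * (1 - t) ^ b) volume 0 1 := by
  have half : ∀ a' b' : ℝ, -1 < a' → IntervalIntegrable
      (fun t : ℝ => t ^ a' * (1 - t) ^ b') volume 0 (1/2) := by
    intro a' b' ha'
    apply IntervalIntegrable.mul_continuousOn (intervalIntegral.intervalIntegrable_rpow' ha')
    apply ContinuousOn.rpow_const ((continuous_const.sub continuous_id).continuousOn)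
    intro x hx
    rw [uIcc_of_le (by norm_num : (0:ℝ) ≤ 1/2)] at hx
    left
    have := hx.2
    simp only [Pi.sub_apply, id_eq] at *
    intro h; linarith [sub_eq_zero.mp h]
  refine (half a b ha).trans ?_
  have h2 := ((half b a hb).comp_sub_left 1)
  norm_num at h2
  refine h2.symm.congr ?_
  refine fun x _ => ?_
  simp only [sub_sub_cancel]
  ring


/-- Integrability of the geometric-mean integrand. -/
lemma geom_integrand_integrable (f g : E → ℝ) (x : E) {l : ℝ} (hl : l ∈ Ioo (0:ℝ) 1)
    (hbf : BddAbove (Set.range fun u : E => (0 : E →L[ℝ] ℝ) u - f u))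
    (hbg : BddAbove (Set.range fun u : E => (0 : E →L[ℝ] ℝ) u - g u)) :
    IntervalIntegrable (fun s : ℝ => s ^ (l - 1) * (1 - s) ^ (-l) * funHarm f g s x)
      volume 0 1 := by
  have hw : IntervalIntegrable (fun s : ℝ => s ^ (l - 1) * (1 - s) ^ (-l)) volume 0 1 :=
    beta_intervalIntegrable (by linarith [hl.1]) (by linarith [hl.2])
  rw [intervalIntegrable_iff_integrableOn_Ioc_of_le zero_le_one] at hw ⊢
  obtain ⟨C, hC⟩ := funHarm_abs_bound f g x hbf hbg
  have hconv : ConvexOn ℝ (Ioo (0:ℝ) 1) (fun s => funHarm f g s x) :=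
    (funHarm_convexOn f g x hbf hbg).subset Ioo_subset_Icc_self (convex_Ioo 0 1)
  have hcont := hconv.continuousOn isOpen_Ioo
  have hmeasF : AEStronglyMeasurable (fun s => funHarm f g s x)
      (volume.restrict (Ioc (0:ℝ) 1)) := by
    rw [← Measure.restrict_congr_set Ioo_ae_eq_Ioc]
    exact hcont.aestronglyMeasurable measurableSet_Ioo
  refine Integrable.mono' (hw.const_mul C) (hw.aestronglyMeasurable.mul hmeasF) ?_
  refine (ae_restrict_iff' measurableSet_Ioc).2 (Filter.Eventually.of_forall fun s hs => ?_)
  have hw0 : 0 ≤ s ^ (l - 1) * (1 - s) ^ (-l) :=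
    mul_nonneg (rpow_nonneg hs.1.le _) (rpow_nonneg (by linarith [hs.2]) _)
  have hFb := hC s ⟨hs.1.le, hs.2⟩
  calc ‖s ^ (l - 1) * (1 - s) ^ (-l) * funHarm f g s x‖
      = s ^ (l - 1) * (1 - s) ^ (-l) * |funHarm f g s x| := by
        rw [norm_mul, Real.norm_eq_abs, Real.norm_eq_abs, abs_of_nonneg hw0]
    _ ≤ s ^ (l - 1) * (1 - s) ^ (-l) * C := mul_le_mul_of_nonneg_left hFb hw0
    _ = C * (s ^ (l - 1) * (1 - s) ^ (-l)) := by ring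

end aux

/-- The weighted functional harmonic and geometric means are pointwise
concave as maps of the pair `(f, g)`. -/
theorem funHarm_funGeom_concave
    {E : Type*} [NormedAddCommGroup E] [NormedSpace ℝ E]
    (l t : ℝ) (hl : l ∈ Set.Ioo (0 : ℝ) 1) (ht : t ∈ Set.Ioo (0 : ℝ) 1)
    (f₁ g₁ f₂ g₂ : E → ℝ)
    (hf₁ : ConvexOn ℝ Set.univ f₁) (hf₁c : Continuous f₁)
    (hg₁ : ConvexOn ℝ Set.univ g₁) (hg₁c : Continuous g₁)
    (hf₂ : ConvexOn ℝ Set.univ f₂) (hf₂c : Continuous f₂)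
    (hg₂ : ConvexOn ℝ Set.univ g₂) (hg₂c : Continuous g₂)
    (hbf₁ : ∀ φ : E →L[ℝ] ℝ, BddAbove (Set.range fun u : E => φ u - f₁ u))
    (hbg₁ : ∀ φ : E →L[ℝ] ℝ, BddAbove (Set.range fun u : E => φ u - g₁ u))
    (hbf₂ : ∀ φ : E →L[ℝ] ℝ, BddAbove (Set.range fun u : E => φ u - f₂ u))
    (hbg₂ : ∀ φ : E →L[ℝ] ℝ, BddAbove (Set.range fun u : E => φ u - g₂ u)) :
    ∀ x : E,
      (1 - t) * funHarm f₁ g₁ l x + t * funHarm f₂ g₂ l x ≤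
        funHarm (fun u => (1 - t) * f₁ u + t * f₂ u) (fun u => (1 - t) * g₁ u + t * g₂ u) l x ∧
      (1 - t) * funGeom f₁ g₁ l x + t * funGeom f₂ g₂ l x ≤
        funGeom (fun u => (1 - t) * f₁ u + t * f₂ u) (fun u => (1 - t) * g₁ u + t * g₂ u) l x := by
  intro x
  have hb0f₁ := hbf₁ 0
  have hb0g₁ := hbg₁ 0
  have hb0f₂ := hbf₂ 0
  have hb0g₂ := hbg₂ 0
  have hharm : ∀ s ∈ Icc (0:ℝ) 1,
      (1 - t) * funHarm f₁ g₁ s x + t * funHarm f₂ g₂ s x ≤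
        funHarm (fun u => (1 - t) * f₁ u + t * f₂ u)
          (fun u => (1 - t) * g₁ u + t * g₂ u) s x :=
    fun s hs => funHarm_comb f₁ g₁ f₂ g₂ hs ht x hb0f₁ hb0g₁ hb0f₂ hb0g₂
  refine ⟨hharm l (Ioo_subset_Icc_self hl), ?_⟩
  -- the geometric part
  have hbcf : BddAbove (Set.range fun u : E =>
      (0 : E →L[ℝ] ℝ) u - ((1 - t) * f₁ u + t * f₂ u)) := by
    obtain ⟨c₁, hc₁⟩ := hb0f₁
    obtain ⟨c₂, hc₂⟩ := hb0f₂
    refine ⟨(1 - t) * c₁ + t * c₂, ?_⟩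
    rintro r ⟨u, rfl⟩
    have h1 := hc₁ (Set.mem_range_self u)
    have h2 := hc₂ (Set.mem_range_self u)
    simp only [ContinuousLinearMap.zero_apply, zero_sub] at *
    nlinarith [ht.1, ht.2]
  have hbcg : BddAbove (Set.range fun u : E =>
      (0 : E →L[ℝ] ℝ) u - ((1 - t) * g₁ u + t * g₂ u)) := by
    obtain ⟨c₁, hc₁⟩ := hb0g₁
    obtain ⟨c₂, hc₂⟩ := hb0g₂
    refine ⟨(1 - t) * c₁ + t * c₂, ?_⟩
    rintro r ⟨u, rfl⟩
    have h1 := hc₁ (Set.mem_range_self u)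
    have h2 := hc₂ (Set.mem_range_self u)
    simp only [ContinuousLinearMap.zero_apply, zero_sub] at *
    nlinarith [ht.1, ht.2]
  have I₁ := geom_integrand_integrable f₁ g₁ x hl hb0f₁ hb0g₁
  have I₂ := geom_integrand_integrable f₂ g₂ x hl hb0f₂ hb0g₂
  have Ic := geom_integrand_integrable (fun u => (1 - t) * f₁ u + t * f₂ u)
    (fun u => (1 - t) * g₁ u + t * g₂ u) x hl hbcf hbcg
  have hc : 0 < Real.sin (π * l) / π := by
    apply div_pos _ pi_pos
    apply Real.sin_pos_of_pos_of_lt_pi (mul_pos pi_pos hl.1)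
    nlinarith [pi_pos, hl.2]
  have hmono : ∫ s in (0:ℝ)..1,
        ((1 - t) * (s ^ (l - 1) * (1 - s) ^ (-l) * funHarm f₁ g₁ s x) +
          t * (s ^ (l - 1) * (1 - s) ^ (-l) * funHarm f₂ g₂ s x)) ≤
      ∫ s in (0:ℝ)..1, s ^ (l - 1) * (1 - s) ^ (-l) *
        funHarm (fun u => (1 - t) * f₁ u + t * f₂ u)
          (fun u => (1 - t) * g₁ u + t * g₂ u) s x := by
    refine intervalIntegral.integral_mono_on zero_le_one
      ((I₁.const_mul (1 - t)).add (I₂.const_mul t)) Ic fun s hs => ?_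
    have hw0 : 0 ≤ s ^ (l - 1) * (1 - s) ^ (-l) :=
      mul_nonneg (rpow_nonneg hs.1 _) (rpow_nonneg (by linarith [hs.2]) _)
    have := mul_le_mul_of_nonneg_left (hharm s hs) hw0
    nlinarith [this]
  have hsplit : ∫ s in (0:ℝ)..1,
        ((1 - t) * (s ^ (l - 1) * (1 - s) ^ (-l) * funHarm f₁ g₁ s x) +
          t * (s ^ (l - 1) * (1 - s) ^ (-l) * funHarm f₂ g₂ s x)) =
      (1 - t) * (∫ s in (0:ℝ)..1, s ^ (l - 1) * (1 - s) ^ (-l) * funHarm f₁ g₁ s x) +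
      t * (∫ s in (0:ℝ)..1, s ^ (l - 1) * (1 - s) ^ (-l) * funHarm f₂ g₂ s x) := by
    rw [intervalIntegral.integral_add (I₁.const_mul (1 - t)) (I₂.const_mul t),
      intervalIntegral.integral_const_mul, intervalIntegral.integral_const_mul]
  rw [hsplit] at hmono
  simp only [funGeom]
  nlinarith [mul_le_mul_of_nonneg_left hmono hc.le]
end

section
/- Let E be a real normed vector space, let λ ∈ (0,1), and let f, g : E → ℝ be convex continuous functions admitting a common continuous affine minorant (there exist φ₀ ∈ E* and c ∈ ℝ with φ₀(u) − c ≤ f(u) and φ₀(u) − c ≤ g(u) for all u ∈ E). For s ∈ [0,1] define G_s(f,g;λ)(x) = (sin(πλ)/π) ∫₀¹ t^{λ−1}(1−t)^{−λ} (f !_{st+(1−s)λ} g)(x) dt. Then for every s ∈ [0,1] and every x ∈ E, (f !_λ g)(x) ≤ G_s(f,g;λ)(x) ≤ (1−s)(f !_λ g)(x) + s(f ♯_λ g)(x) ≤ (f ♯_λ g)(x). -/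
open Real

/-- The family `G_s(f,g;λ)(x) = (sin(πλ)/π) ∫₀¹ t^{λ−1}(1−t)^{−λ} (f !_{st+(1−s)λ} g)(x) dt`. -/
noncomputable def funG {E : Type*} [NormedAddCommGroup E] [NormedSpace ℝ E]
    (f g : E → ℝ) (l s : ℝ) (x : E) : ℝ :=
  (Real.sin (π * l) / π) *
    ∫ t in (0 : ℝ)..1, t ^ (l - 1) * (1 - t) ^ (-l) * funHarm f g (s * t + (1 - s) * l) x

/- ### Auxiliary lemmas -/

lemma beta_cast {a b : ℝ} (x : ℝ) (hx0 : 0 ≤ x) (hx1 : x ≤ 1) :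
    (x : ℂ) ^ ((a : ℂ) - 1) * (1 - (x : ℂ)) ^ ((b : ℂ) - 1)
      = ((x ^ (a - 1) * (1 - x) ^ (b - 1) : ℝ) : ℂ) := by
  rw [Complex.ofReal_mul, Complex.ofReal_cpow hx0,
    Complex.ofReal_cpow (by linarith : (0:ℝ) ≤ 1 - x)]
  push_cast
  ring

lemma realBeta_integrable {a b : ℝ} (ha : 0 < a) (hb : 0 < b) :
    IntervalIntegrable (fun t : ℝ => t ^ (a - 1) * (1 - t) ^ (b - 1))
      MeasureTheory.volume 0 1 := by
  have hC := Complex.betaIntegral_convergent (u := a) (v := b)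
    (by simpa using ha) (by simpa using hb)
  rw [intervalIntegrable_iff_integrableOn_Ioc_of_le zero_le_one] at hC ⊢
  refine hC.re.congr ?_
  filter_upwards [MeasureTheory.ae_restrict_mem measurableSet_Ioc] with t ht
  rw [beta_cast t ht.1.le ht.2]
  simp

lemma realBeta_eq {a b : ℝ} (ha : 0 < a) (hb : 0 < b) :
    ∫ t in (0:ℝ)..1, t ^ (a - 1) * (1 - t) ^ (b - 1)
      = Real.Gamma a * Real.Gamma b / Real.Gamma (a + b) := by
  have key := Complex.Gamma_mul_Gamma_eq_betaIntegral (s := a) (t := b)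
    (by simpa using ha) (by simpa using hb)
  have hint : Complex.betaIntegral a b
      = ((∫ t in (0:ℝ)..1, t ^ (a - 1) * (1 - t) ^ (b - 1) : ℝ) : ℂ) := by
    have h1 : (∫ x : ℝ in (0:ℝ)..1, (x : ℂ) ^ ((a:ℂ) - 1) * (1 - (x:ℂ)) ^ ((b:ℂ) - 1))
        = ∫ x : ℝ in (0:ℝ)..1, ((x ^ (a - 1) * (1 - x) ^ (b - 1) : ℝ) : ℂ) := by
      refine intervalIntegral.integral_congr fun t ht => ?_
      rw [Set.uIcc_of_le zero_le_one] at ht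
      exact beta_cast t ht.1 ht.2
    rw [Complex.betaIntegral]
    exact h1.trans (RCLike.intervalIntegral_ofReal (𝕜 := ℂ))
  rw [hint] at key
  have h2 : Real.Gamma a * Real.Gamma b
      = Real.Gamma (a + b) * ∫ t in (0:ℝ)..1, t ^ (a - 1) * (1 - t) ^ (b - 1) := by
    rw [show ((a : ℂ) + (b : ℂ)) = ((a + b : ℝ) : ℂ) by push_cast; ring,
      Complex.Gamma_ofReal, Complex.Gamma_ofReal, Complex.Gamma_ofReal,
      ← Complex.ofReal_mul, ← Complex.ofReal_mul] at key
    exact_mod_cast key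
  have hΓ : Real.Gamma (a + b) ≠ 0 := (Real.Gamma_pos_of_pos (by linarith)).ne'
  rw [eq_div_iff hΓ]
  linear_combination -h2

section Harm

variable {E : Type*} [NormedAddCommGroup E] [NormedSpace ℝ E]

lemma le_funHarm (f g : E → ℝ) (x : E) {t : ℝ} (ht : t ∈ Set.Icc (0:ℝ) 1)
    (φ : E →L[ℝ] ℝ) (c₁ c₂ : ℝ)
    (h₁ : ∀ u, φ u - f u ≤ c₁) (h₂ : ∀ u, φ u - g u ≤ c₂) :
    φ x - (1 - t) * c₁ - t * c₂ ≤ funHarm f g t x := by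
  rw [funHarm]
  refine le_csSup ?_ ⟨φ, c₁, c₂, h₁, h₂, rfl⟩
  refine ⟨(1 - t) * f x + t * g x, ?_⟩
  rintro r ⟨ψ, d₁, d₂, k₁, k₂, rfl⟩
  have e₁ := k₁ x
  have e₂ := k₂ x
  nlinarith [ht.1, ht.2,
    mul_le_mul_of_nonneg_left e₁ (show (0:ℝ) ≤ 1 - t by linarith [ht.2]),
    mul_le_mul_of_nonneg_left e₂ ht.1]

lemma funHarm_le (f g : E → ℝ) (x : E) (t : ℝ) {a : ℝ}
    (φ₀ : E →L[ℝ] ℝ) (c : ℝ)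
    (h₀f : ∀ u, φ₀ u - c ≤ f u) (h₀g : ∀ u, φ₀ u - c ≤ g u)
    (hub : ∀ (φ : E →L[ℝ] ℝ) (c₁ c₂ : ℝ), (∀ u, φ u - f u ≤ c₁) → (∀ u, φ u - g u ≤ c₂) →
      φ x - (1 - t) * c₁ - t * c₂ ≤ a) :
    funHarm f g t x ≤ a := by
  rw [funHarm]
  refine csSup_le ⟨φ₀ x - (1 - t) * c - t * c, φ₀, c, c,
    fun u => by linarith [h₀f u], fun u => by linarith [h₀g u], rfl⟩ ?_
  rintro r ⟨φ, c₁, c₂, h₁, h₂, rfl⟩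
  exact hub φ c₁ c₂ h₁ h₂

lemma funHarm_ge_const (f g : E → ℝ) (x : E) {t : ℝ} (ht : t ∈ Set.Icc (0:ℝ) 1)
    (φ₀ : E →L[ℝ] ℝ) (c : ℝ)
    (h₀f : ∀ u, φ₀ u - c ≤ f u) (h₀g : ∀ u, φ₀ u - c ≤ g u) :
    φ₀ x - c ≤ funHarm f g t x := by
  have := le_funHarm f g x ht φ₀ c c (fun u => by linarith [h₀f u])
    (fun u => by linarith [h₀g u])
  have h : φ₀ x - (1 - t) * c - t * c = φ₀ x - c := by ring
  linarith [h ▸ this]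

lemma funHarm_le_comb (f g : E → ℝ) (x : E) {t : ℝ} (ht : t ∈ Set.Icc (0:ℝ) 1)
    (φ₀ : E →L[ℝ] ℝ) (c : ℝ)
    (h₀f : ∀ u, φ₀ u - c ≤ f u) (h₀g : ∀ u, φ₀ u - c ≤ g u) :
    funHarm f g t x ≤ (1 - t) * f x + t * g x := by
  refine funHarm_le f g x t φ₀ c h₀f h₀g ?_
  intro φ c₁ c₂ h₁ h₂
  have e₁ := h₁ x
  have e₂ := h₂ x
  nlinarith [ht.1, ht.2,
    mul_le_mul_of_nonneg_left e₁ (show (0:ℝ) ≤ 1 - t by linarith [ht.2]),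
    mul_le_mul_of_nonneg_left e₂ ht.1]

lemma funHarm_convexOn_s9 (f g : E → ℝ) (x : E)
    (φ₀ : E →L[ℝ] ℝ) (c : ℝ)
    (h₀f : ∀ u, φ₀ u - c ≤ f u) (h₀g : ∀ u, φ₀ u - c ≤ g u) :
    ConvexOn ℝ (Set.Icc (0:ℝ) 1) (fun t => funHarm f g t x) := by
  refine ⟨convex_Icc _ _, fun p hp q hq a b ha hb hab => ?_⟩
  simp only [smul_eq_mul]
  refine funHarm_le f g x _ φ₀ c h₀f h₀g ?_
  intro φ c₁ c₂ h₁ h₂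
  have e₁ := le_funHarm f g x hp φ c₁ c₂ h₁ h₂
  have e₂ := le_funHarm f g x hq φ c₁ c₂ h₁ h₂
  calc φ x - (1 - (a * p + b * q)) * c₁ - (a * p + b * q) * c₂
      = a * (φ x - (1 - p) * c₁ - p * c₂) + b * (φ x - (1 - q) * c₁ - q * c₂) := by
        linear_combination (c₁ - φ x) * hab
    _ ≤ a * funHarm f g p x + b * funHarm f g q x :=
        add_le_add (mul_le_mul_of_nonneg_left e₁ ha) (mul_le_mul_of_nonneg_left e₂ hb)

end Harm

/-- For every `s ∈ [0,1]` and every `x`,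
`(f !_λ g)(x) ≤ G_s(f,g;λ)(x) ≤ (1−s)(f !_λ g)(x) + s(f ♯_λ g)(x) ≤ (f ♯_λ g)(x)`. -/
theorem funG_between_harm_and_geom
    {E : Type*} [NormedAddCommGroup E] [NormedSpace ℝ E]
    (l : ℝ) (hl : l ∈ Set.Ioo (0 : ℝ) 1)
    (f g : E → ℝ)
    (hf : ConvexOn ℝ Set.univ f) (hfc : Continuous f)
    (hg : ConvexOn ℝ Set.univ g) (hgc : Continuous g)
    (hmin : ∃ φ₀ : E →L[ℝ] ℝ, ∃ c : ℝ, ∀ u : E, φ₀ u - c ≤ f u ∧ φ₀ u - c ≤ g u) :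
    ∀ s ∈ Set.Icc (0 : ℝ) 1, ∀ x : E,
      funHarm f g l x ≤ funG f g l s x ∧
      funG f g l s x ≤ (1 - s) * funHarm f g l x + s * funGeom f g l x ∧
      (1 - s) * funHarm f g l x + s * funGeom f g l x ≤ funGeom f g l x := by
  obtain ⟨hl0, hl1⟩ := hl
  intro s hs x
  obtain ⟨φ₀, c, hφ₀⟩ := hmin
  have h₀f : ∀ u, φ₀ u - c ≤ f u := fun u => (hφ₀ u).1
  have h₀g : ∀ u, φ₀ u - c ≤ g u := fun u => (hφ₀ u).2
  -- positivity of sin (π l)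
  have hσ : 0 < Real.sin (π * l) :=
    Real.sin_pos_of_pos_of_lt_pi (by positivity)
      (by nlinarith [Real.pi_pos])
  have hπσ : 0 < Real.sin (π * l) / π := div_pos hσ Real.pi_pos
  -- the beta weight
  have hW_int : IntervalIntegrable (fun t : ℝ => t ^ (l - 1) * (1 - t) ^ (-l))
      MeasureTheory.volume 0 1 := by
    have := realBeta_integrable hl0 (by linarith : (0:ℝ) < 1 - l)
    simpa [show (1:ℝ) - l - 1 = -l by ring] using this
  have hW_val : ∫ t in (0:ℝ)..1, t ^ (l - 1) * (1 - t) ^ (-l) = π / Real.sin (π * l) := by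
    rw [show (-l) = 1 - l - 1 by ring, realBeta_eq hl0 (by linarith : (0:ℝ) < 1 - l),
      show l + (1 - l) = 1 by ring, Real.Gamma_one, div_one,
      Real.Gamma_mul_Gamma_one_sub]
  -- t times the beta weight
  have heqtW : Set.EqOn (fun t : ℝ => t * (t ^ (l - 1) * (1 - t) ^ (-l)))
      (fun t : ℝ => t ^ (l + 1 - 1) * (1 - t) ^ (1 - l - 1)) (Set.uIcc 0 1) := by
    intro t ht
    rw [Set.uIcc_of_le zero_le_one] at ht
    simp only
    rcases eq_or_lt_of_le ht.1 with h0 | h0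
    · rw [← h0, show l + 1 - 1 = l by ring, Real.zero_rpow hl0.ne']
      ring
    · rw [show l + 1 - 1 = l - 1 + 1 by ring, Real.rpow_add_one h0.ne',
        show (1:ℝ) - l - 1 = -l by ring]
      ring
  have htW_int : IntervalIntegrable (fun t : ℝ => t * (t ^ (l - 1) * (1 - t) ^ (-l)))
      MeasureTheory.volume 0 1 := by
    have hB := realBeta_integrable (by linarith : (0:ℝ) < l + 1) (by linarith : (0:ℝ) < 1 - l)
    rw [intervalIntegrable_iff_integrableOn_Ioc_of_le zero_le_one] at hB ⊢
    refine hB.congr ?_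
    filter_upwards [MeasureTheory.ae_restrict_mem measurableSet_Ioc] with t ht
    exact (heqtW (by rw [Set.uIcc_of_le zero_le_one]; exact ⟨ht.1.le, ht.2⟩)).symm
  have htW_val : ∫ t in (0:ℝ)..1, t * (t ^ (l - 1) * (1 - t) ^ (-l))
      = l * (π / Real.sin (π * l)) := by
    rw [intervalIntegral.integral_congr heqtW,
      realBeta_eq (by linarith : (0:ℝ) < l + 1) (by linarith : (0:ℝ) < 1 - l),
      Real.Gamma_add_one hl0.ne', show l + 1 + (1 - l) = 2 by ring, Real.Gamma_two,
      div_one, mul_assoc, Real.Gamma_mul_Gamma_one_sub]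
  -- nonnegativity of the weight
  have hWnn : ∀ t ∈ Set.Icc (0:ℝ) 1, 0 ≤ t ^ (l - 1) * (1 - t) ^ (-l) := fun t ht =>
    mul_nonneg (Real.rpow_nonneg ht.1 _) (Real.rpow_nonneg (by linarith [ht.2]) _)
  -- the affine reparametrization
  have hμI : ∀ t ∈ Set.Icc (0:ℝ) 1, s * t + (1 - s) * l ∈ Set.Icc (0:ℝ) 1 := by
    intro t ht
    constructor
    · have := mul_nonneg hs.1 ht.1
      have := mul_nonneg (by linarith [hs.2] : (0:ℝ) ≤ 1 - s) hl0.le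
      linarith
    · have h1 : s * t ≤ s * 1 := mul_le_mul_of_nonneg_left ht.2 hs.1
      have h2 : (1 - s) * l ≤ (1 - s) * 1 :=
        mul_le_mul_of_nonneg_left hl1.le (by linarith [hs.2])
      linarith
  have hμO : ∀ t ∈ Set.Ioo (0:ℝ) 1, s * t + (1 - s) * l ∈ Set.Ioo (0:ℝ) 1 := by
    intro t ht
    constructor
    · rcases eq_or_lt_of_le hs.1 with h | h
      · simp only [← h, zero_mul, sub_zero, one_mul, zero_add]
        exact hl0
      · have h1 : 0 < s * t := mul_pos h ht.1
        have h2 : (0:ℝ) ≤ (1 - s) * l := mul_nonneg (by linarith [hs.2]) hl0.le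
        linarith
    · rcases eq_or_lt_of_le hs.2 with h | h
      · simp only [h, one_mul, sub_self, zero_mul, add_zero]
        exact ht.2
      · have h1 : s * t ≤ s * 1 := mul_le_mul_of_nonneg_left ht.2.le hs.1
        have h2 : (1 - s) * l < (1 - s) * 1 := mul_lt_mul_of_pos_left hl1 (by linarith)
        linarith
  -- uniform bound on funHarm over [0,1]
  set M : ℝ := |φ₀ x - c| + |f x| + |g x| with hM
  have habs : ∀ u ∈ Set.Icc (0:ℝ) 1, |funHarm f g u x| ≤ M := by
    intro u hu
    have h1 := funHarm_ge_const f g x hu φ₀ c h₀f h₀g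
    have h2 := funHarm_le_comb f g x hu φ₀ c h₀f h₀g
    rw [abs_le]
    constructor
    · have := neg_abs_le (φ₀ x - c)
      have := abs_nonneg (f x)
      have := abs_nonneg (g x)
      simp only [hM]
      linarith
    · have e₁ : (1 - u) * f x ≤ (1 - u) * |f x| :=
        mul_le_mul_of_nonneg_left (le_abs_self _) (by linarith [hu.2])
      have e₂ : u * g x ≤ u * |g x| := mul_le_mul_of_nonneg_left (le_abs_self _) hu.1
      have e₃ : (0:ℝ) ≤ u * |f x| := mul_nonneg hu.1 (abs_nonneg _)
      have e₄ : (0:ℝ) ≤ (1 - u) * |g x| := mul_nonneg (by linarith [hu.2]) (abs_nonneg _)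
      have := abs_nonneg (φ₀ x - c)
      simp only [hM]
      nlinarith
  -- continuity of funHarm in the parameter, on the open interval
  have hconv : ConvexOn ℝ (Set.Icc (0:ℝ) 1) (fun t => funHarm f g t x) :=
    funHarm_convexOn_s9 f g x φ₀ c h₀f h₀g
  have hcont : ContinuousOn (fun u => funHarm f g u x) (Set.Ioo (0:ℝ) 1) :=
    (hconv.subset Set.Ioo_subset_Icc_self (convex_Ioo 0 1)).continuousOn isOpen_Ioo
  -- generic integrability
  have hIoc : MeasureTheory.volume.restrict (Set.Ioo (0:ℝ) 1)
      = MeasureTheory.volume.restrict (Set.Ioc (0:ℝ) 1) :=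
    MeasureTheory.Measure.restrict_congr_set MeasureTheory.Ioo_ae_eq_Ioc
  have hWcont : ContinuousOn (fun t : ℝ => t ^ (l - 1) * (1 - t) ^ (-l)) (Set.Ioo 0 1) := by
    apply ContinuousOn.mul
    · exact continuousOn_id.rpow_const fun t ht => Or.inl ht.1.ne'
    · exact (continuousOn_const.sub continuousOn_id).rpow_const
        fun t ht => Or.inl (sub_ne_zero.2 ht.2.ne')
  have hInt : ∀ k : ℝ → ℝ, ContinuousOn k (Set.Ioo 0 1) →
      (∀ u ∈ Set.Icc (0:ℝ) 1, |k u| ≤ M) →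
      IntervalIntegrable (fun t => t ^ (l - 1) * (1 - t) ^ (-l) * k t)
        MeasureTheory.volume 0 1 := by
    intro k hk hkM
    rw [intervalIntegrable_iff_integrableOn_Ioc_of_le zero_le_one]
    have hWM : MeasureTheory.IntegrableOn
        (fun t : ℝ => M * (t ^ (l - 1) * (1 - t) ^ (-l))) (Set.Ioc 0 1) := by
      rw [← intervalIntegrable_iff_integrableOn_Ioc_of_le zero_le_one]
      exact hW_int.const_mul M
    apply MeasureTheory.Integrable.mono' hWM
    · rw [← hIoc]
      exact (hWcont.mul hk).aestronglyMeasurable measurableSet_Ioo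
    · rw [← hIoc]
      filter_upwards [MeasureTheory.ae_restrict_mem measurableSet_Ioo] with t ht
      have h1 : 0 ≤ t ^ (l - 1) * (1 - t) ^ (-l) := hWnn t ⟨ht.1.le, ht.2.le⟩
      rw [Real.norm_eq_abs, abs_mul, abs_of_nonneg h1]
      calc t ^ (l - 1) * (1 - t) ^ (-l) * |k t|
          ≤ t ^ (l - 1) * (1 - t) ^ (-l) * M :=
            mul_le_mul_of_nonneg_left (hkM t ⟨ht.1.le, ht.2.le⟩) h1
        _ = M * (t ^ (l - 1) * (1 - t) ^ (-l)) := mul_comm _ _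
  have hF1_int : IntervalIntegrable
      (fun t => t ^ (l - 1) * (1 - t) ^ (-l) * funHarm f g t x)
      MeasureTheory.volume 0 1 := hInt _ hcont habs
  have hμcont : Continuous fun t : ℝ => s * t + (1 - s) * l :=
    (continuous_const.mul continuous_id).add continuous_const
  have hF_int : IntervalIntegrable
      (fun t => t ^ (l - 1) * (1 - t) ^ (-l) * funHarm f g (s * t + (1 - s) * l) x)
      MeasureTheory.volume 0 1 :=
    hInt _ (hcont.comp hμcont.continuousOn fun t ht => hμO t ht)
      fun u hu => habs _ (hμI u hu)
  have hlI : l ∈ Set.Icc (0:ℝ) 1 := ⟨hl0.le, hl1.le⟩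
  -- first inequality
  have ineq1 : funHarm f g l x ≤ funG f g l s x := by
    rw [funG]
    refine funHarm_le f g x l φ₀ c h₀f h₀g ?_
    intro φ c₁ c₂ h₁ h₂
    have hfe : (fun t : ℝ => t ^ (l - 1) * (1 - t) ^ (-l) *
          (φ x - (1 - (s * t + (1 - s) * l)) * c₁ - (s * t + (1 - s) * l) * c₂))
        = fun t : ℝ => (φ x - c₁ + (1 - s) * l * (c₁ - c₂)) * (t ^ (l - 1) * (1 - t) ^ (-l))
            + (s * (c₁ - c₂)) * (t * (t ^ (l - 1) * (1 - t) ^ (-l))) := by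
      funext t; ring
    have haff_int : IntervalIntegrable (fun t : ℝ => t ^ (l - 1) * (1 - t) ^ (-l) *
        (φ x - (1 - (s * t + (1 - s) * l)) * c₁ - (s * t + (1 - s) * l) * c₂))
        MeasureTheory.volume 0 1 := by
      rw [hfe]
      exact (hW_int.const_mul _).add (htW_int.const_mul _)
    have haff_val : (∫ t in (0:ℝ)..1, t ^ (l - 1) * (1 - t) ^ (-l) *
        (φ x - (1 - (s * t + (1 - s) * l)) * c₁ - (s * t + (1 - s) * l) * c₂))
        = (φ x - (1 - l) * c₁ - l * c₂) * (π / Real.sin (π * l)) := by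
      rw [hfe, intervalIntegral.integral_add (hW_int.const_mul _) (htW_int.const_mul _),
        intervalIntegral.integral_const_mul, intervalIntegral.integral_const_mul,
        hW_val, htW_val]
      ring
    have hmono := intervalIntegral.integral_mono_on zero_le_one haff_int hF_int
      (fun t ht => mul_le_mul_of_nonneg_left
        (le_funHarm f g x (hμI t ht) φ c₁ c₂ h₁ h₂) (hWnn t ht))
    calc φ x - (1 - l) * c₁ - l * c₂
        = (Real.sin (π * l) / π) * ((φ x - (1 - l) * c₁ - l * c₂) * (π / Real.sin (π * l))) := by
          rw [mul_left_comm, div_mul_div_cancel₀ Real.pi_ne_zero, div_self hσ.ne', mul_one]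
      _ = (Real.sin (π * l) / π) * ∫ t in (0:ℝ)..1, t ^ (l - 1) * (1 - t) ^ (-l) *
            (φ x - (1 - (s * t + (1 - s) * l)) * c₁ - (s * t + (1 - s) * l) * c₂) := by
          rw [haff_val]
      _ ≤ (Real.sin (π * l) / π) * ∫ t in (0:ℝ)..1, t ^ (l - 1) * (1 - t) ^ (-l) *
            funHarm f g (s * t + (1 - s) * l) x :=
          mul_le_mul_of_nonneg_left hmono hπσ.le
  -- pointwise second inequality
  have hpt : ∀ t ∈ Set.Icc (0:ℝ) 1, funHarm f g (s * t + (1 - s) * l) x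
      ≤ (1 - s) * funHarm f g l x + s * funHarm f g t x := by
    intro t ht
    refine funHarm_le f g x _ φ₀ c h₀f h₀g ?_
    intro φ c₁ c₂ h₁ h₂
    have e₁ := le_funHarm f g x hlI φ c₁ c₂ h₁ h₂
    have e₂ := le_funHarm f g x ht φ c₁ c₂ h₁ h₂
    calc φ x - (1 - (s * t + (1 - s) * l)) * c₁ - (s * t + (1 - s) * l) * c₂
        = (1 - s) * (φ x - (1 - l) * c₁ - l * c₂) + s * (φ x - (1 - t) * c₁ - t * c₂) := by
          ring
      _ ≤ (1 - s) * funHarm f g l x + s * funHarm f g t x :=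
          add_le_add (mul_le_mul_of_nonneg_left e₁ (by linarith [hs.2]))
            (mul_le_mul_of_nonneg_left e₂ hs.1)
  have hfe2 : (fun t : ℝ => t ^ (l - 1) * (1 - t) ^ (-l) *
        ((1 - s) * funHarm f g l x + s * funHarm f g t x))
      = fun t : ℝ => ((1 - s) * funHarm f g l x) * (t ^ (l - 1) * (1 - t) ^ (-l))
          + s * (t ^ (l - 1) * (1 - t) ^ (-l) * funHarm f g t x) := by
    funext t; ring
  have hrhs_int : IntervalIntegrable (fun t : ℝ => t ^ (l - 1) * (1 - t) ^ (-l) *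
      ((1 - s) * funHarm f g l x + s * funHarm f g t x)) MeasureTheory.volume 0 1 := by
    rw [hfe2]
    exact (hW_int.const_mul _).add (hF1_int.const_mul _)
  have hrhs_val : (∫ t in (0:ℝ)..1, t ^ (l - 1) * (1 - t) ^ (-l) *
      ((1 - s) * funHarm f g l x + s * funHarm f g t x))
      = ((1 - s) * funHarm f g l x) * (π / Real.sin (π * l))
        + s * ∫ t in (0:ℝ)..1, t ^ (l - 1) * (1 - t) ^ (-l) * funHarm f g t x := by
    rw [hfe2, intervalIntegral.integral_add (hW_int.const_mul _) (hF1_int.const_mul _),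
      intervalIntegral.integral_const_mul, intervalIntegral.integral_const_mul, hW_val]
  have ineq2 : funG f g l s x ≤ (1 - s) * funHarm f g l x + s * funGeom f g l x := by
    rw [funG, funGeom]
    have hmono2 := intervalIntegral.integral_mono_on zero_le_one hF_int hrhs_int
      (fun t ht => mul_le_mul_of_nonneg_left (hpt t ht) (hWnn t ht))
    calc (Real.sin (π * l) / π) * ∫ t in (0:ℝ)..1, t ^ (l - 1) * (1 - t) ^ (-l) *
          funHarm f g (s * t + (1 - s) * l) x
        ≤ (Real.sin (π * l) / π) * ∫ t in (0:ℝ)..1, t ^ (l - 1) * (1 - t) ^ (-l) *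
            ((1 - s) * funHarm f g l x + s * funHarm f g t x) :=
          mul_le_mul_of_nonneg_left hmono2 hπσ.le
      _ = (1 - s) * funHarm f g l x + s * ((Real.sin (π * l) / π) *
            ∫ t in (0:ℝ)..1, t ^ (l - 1) * (1 - t) ^ (-l) * funHarm f g t x) := by
          rw [hrhs_val]
          field_simp
  -- third inequality
  have hGeq : funG f g l 1 x = funGeom f g l x := by
    rw [funG, funGeom]
    norm_num
  have ineq3 : (1 - s) * funHarm f g l x + s * funGeom f g l x ≤ funGeom f g l x := by
    have hHG : funHarm f g l x ≤ funGeom f g l x := by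
      rw [funGeom]
      refine funHarm_le f g x l φ₀ c h₀f h₀g ?_
      intro φ c₁ c₂ h₁ h₂
      have hfe1 : (fun t : ℝ => t ^ (l - 1) * (1 - t) ^ (-l) *
            (φ x - (1 - t) * c₁ - t * c₂))
          = fun t : ℝ => (φ x - c₁) * (t ^ (l - 1) * (1 - t) ^ (-l))
              + (c₁ - c₂) * (t * (t ^ (l - 1) * (1 - t) ^ (-l))) := by
        funext t; ring
      have haff_int : IntervalIntegrable (fun t : ℝ => t ^ (l - 1) * (1 - t) ^ (-l) *
          (φ x - (1 - t) * c₁ - t * c₂)) MeasureTheory.volume 0 1 := by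
        rw [hfe1]
        exact (hW_int.const_mul _).add (htW_int.const_mul _)
      have haff_val : (∫ t in (0:ℝ)..1, t ^ (l - 1) * (1 - t) ^ (-l) *
          (φ x - (1 - t) * c₁ - t * c₂))
          = (φ x - (1 - l) * c₁ - l * c₂) * (π / Real.sin (π * l)) := by
        rw [hfe1, intervalIntegral.integral_add (hW_int.const_mul _) (htW_int.const_mul _),
          intervalIntegral.integral_const_mul, intervalIntegral.integral_const_mul,
          hW_val, htW_val]
        ring
      have hmono := intervalIntegral.integral_mono_on zero_le_one haff_int hF1_int
        (fun t ht => mul_le_mul_of_nonneg_left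
          (le_funHarm f g x ht φ c₁ c₂ h₁ h₂) (hWnn t ht))
      calc φ x - (1 - l) * c₁ - l * c₂
          = (Real.sin (π * l) / π) *
              ((φ x - (1 - l) * c₁ - l * c₂) * (π / Real.sin (π * l))) := by
            rw [mul_left_comm, div_mul_div_cancel₀ Real.pi_ne_zero, div_self hσ.ne', mul_one]
        _ = (Real.sin (π * l) / π) * ∫ t in (0:ℝ)..1, t ^ (l - 1) * (1 - t) ^ (-l) *
              (φ x - (1 - t) * c₁ - t * c₂) := by rw [haff_val]
        _ ≤ (Real.sin (π * l) / π) * ∫ t in (0:ℝ)..1, t ^ (l - 1) * (1 - t) ^ (-l) *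
              funHarm f g t x := mul_le_mul_of_nonneg_left hmono hπσ.le
    nlinarith [hs.1, hs.2, mul_le_mul_of_nonneg_left hHG (show (0:ℝ) ≤ 1 - s by linarith [hs.2])]
  exact ⟨ineq1, ineq2, ineq3⟩
end

section
/- Let E be a real normed vector space, let λ ∈ (0,1), and let f, g : E → ℝ be convex continuous functions admitting a common continuous affine minorant (there exist φ₀ ∈ E* and c ∈ ℝ with φ₀(u) − c ≤ f(u) and φ₀(u) − c ≤ g(u) for all u ∈ E). For s ∈ [0,1] define G_s(f,g;λ)(x) = (sin(πλ)/π) ∫₀¹ t^{λ−1}(1−t)^{−λ} (f !_{st+(1−s)λ} g)(x) dt. Then for every fixed x ∈ E, the map s ↦ G_s(f,g;λ)(x) is convex on [0,1] and monotone increasing on [0,1]. -/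
open Real

open Set MeasureTheory intervalIntegral

/-- For every fixed `x`, the map `s ↦ G_s(f,g;λ)(x)` is convex and monotone
increasing on `[0,1]`. -/
theorem funG_convexOn_monotoneOn
    {E : Type*} [NormedAddCommGroup E] [NormedSpace ℝ E]
    (l : ℝ) (hl : l ∈ Set.Ioo (0 : ℝ) 1)
    (f g : E → ℝ)
    (hf : ConvexOn ℝ Set.univ f) (hfc : Continuous f)
    (hg : ConvexOn ℝ Set.univ g) (hgc : Continuous g)
    (hmin : ∃ φ₀ : E →L[ℝ] ℝ, ∃ c : ℝ, ∀ u : E, φ₀ u - c ≤ f u ∧ φ₀ u - c ≤ g u)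
    (x : E) :
    ConvexOn ℝ (Set.Icc (0 : ℝ) 1) (fun s => funG f g l s x) ∧
      MonotoneOn (fun s => funG f g l s x) (Set.Icc (0 : ℝ) 1) := by
  obtain ⟨hl0, hl1⟩ := hl
  obtain ⟨φ₀, c, hφ₀⟩ := hmin
  set w : ℝ → ℝ := fun t => t ^ (l - 1) * (1 - t) ^ (-l) with hwdef
  set S : ℝ → Set ℝ := fun τ => { r : ℝ | ∃ φ : E →L[ℝ] ℝ, ∃ c₁ c₂ : ℝ,
    (∀ u : E, φ u - f u ≤ c₁) ∧ (∀ u : E, φ u - g u ≤ c₂) ∧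
    r = φ x - (1 - τ) * c₁ - τ * c₂ } with hSdef
  set h : ℝ → ℝ := fun τ => funHarm f g τ x with hhdef
  have hhS : ∀ τ, h τ = sSup (S τ) := fun τ => rfl
  -- basic facts about S and h
  have hmem0 : ∀ τ, (φ₀ x - c) ∈ S τ := fun τ =>
    ⟨φ₀, c, c, fun u => by linarith [(hφ₀ u).1], fun u => by linarith [(hφ₀ u).2], by ring⟩
  have hne : ∀ τ, (S τ).Nonempty := fun τ => ⟨_, hmem0 τ⟩
  have hub' : ∀ τ ∈ Icc (0:ℝ) 1, ∀ r ∈ S τ, r ≤ (1 - τ) * f x + τ * g x := by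
    rintro τ ⟨hτ0, hτ1⟩ r ⟨φ, c₁, c₂, H1, H2, rfl⟩
    nlinarith [mul_le_mul_of_nonneg_left (H1 x) (by linarith : (0:ℝ) ≤ 1 - τ),
      mul_le_mul_of_nonneg_left (H2 x) hτ0]
  have hBdd : ∀ τ ∈ Icc (0:ℝ) 1, BddAbove (S τ) := fun τ hτ =>
    ⟨_, fun r hr => hub' τ hτ r hr⟩
  have hle : ∀ τ ∈ Icc (0:ℝ) 1, ∀ r ∈ S τ, r ≤ h τ := fun τ hτ r hr =>
    le_csSup (hBdd τ hτ) hr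
  have hlb : ∀ τ ∈ Icc (0:ℝ) 1, φ₀ x - c ≤ h τ := fun τ hτ => hle τ hτ _ (hmem0 τ)
  have hub : ∀ τ ∈ Icc (0:ℝ) 1, h τ ≤ (1 - τ) * f x + τ * g x := fun τ hτ =>
    csSup_le (hne τ) (hub' τ hτ)
  set C : ℝ := |φ₀ x - c| + |f x| + |g x| with hCdef
  have habs : ∀ τ ∈ Icc (0:ℝ) 1, |h τ| ≤ C := by
    intro τ hτ
    rw [abs_le]
    have h1 := hlb τ hτ
    have h2 := hub τ hτ
    constructor
    · have := neg_abs_le (φ₀ x - c)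
      have := abs_nonneg (f x); have := abs_nonneg (g x)
      linarith
    · have e1 : (1 - τ) * f x ≤ (1 - τ) * |f x| :=
        mul_le_mul_of_nonneg_left (le_abs_self _) (by linarith [hτ.2])
      have e2 : τ * g x ≤ τ * |g x| := mul_le_mul_of_nonneg_left (le_abs_self _) hτ.1
      have e3 : τ * |f x| ≥ 0 := mul_nonneg hτ.1 (abs_nonneg _)
      have e4 : τ * |g x| ≤ |g x| := by
        nlinarith [abs_nonneg (g x), hτ.2, hτ.1]
      have := abs_nonneg (φ₀ x - c)
      nlinarith
  -- convexity of h on [0,1]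
  have hconv : ConvexOn ℝ (Icc (0:ℝ) 1) h := by
    refine ⟨convex_Icc 0 1, ?_⟩
    intro τ₁ h₁ τ₂ h₂ a b ha hb hab
    simp only [smul_eq_mul]
    rw [hhS]
    apply csSup_le (hne _)
    rintro r ⟨φ, c₁, c₂, H1, H2, rfl⟩
    have m1 : φ x - (1 - τ₁) * c₁ - τ₁ * c₂ ≤ h τ₁ := hle τ₁ h₁ _ ⟨φ, c₁, c₂, H1, H2, rfl⟩
    have m2 : φ x - (1 - τ₂) * c₁ - τ₂ * c₂ ≤ h τ₂ := hle τ₂ h₂ _ ⟨φ, c₁, c₂, H1, H2, rfl⟩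
    have e : φ x - (1 - (a * τ₁ + b * τ₂)) * c₁ - (a * τ₁ + b * τ₂) * c₂
        = a * (φ x - (1 - τ₁) * c₁ - τ₁ * c₂) + b * (φ x - (1 - τ₂) * c₁ - τ₂ * c₂) := by
      have hb' : b = 1 - a := by linarith
      rw [hb']; ring
    rw [e]
    exact add_le_add (mul_le_mul_of_nonneg_left m1 ha) (mul_le_mul_of_nonneg_left m2 hb)
  have hcontIoo : ContinuousOn h (Ioo (0:ℝ) 1) :=
    (hconv.subset Ioo_subset_Icc_self (convex_Ioo 0 1)).continuousOn isOpen_Ioo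
  -- the affine parameter stays in the right range
  have hτmemIcc : ∀ s ∈ Icc (0:ℝ) 1, ∀ t ∈ Icc (0:ℝ) 1,
      s * t + (1 - s) * l ∈ Icc (0:ℝ) 1 := by
    rintro s ⟨hs0, hs1⟩ t ⟨ht0, ht1⟩
    rcases le_total l t with hlt | hlt
    · constructor
      · nlinarith [mul_nonneg hs0 (by linarith : (0:ℝ) ≤ t - l)]
      · nlinarith [mul_nonneg (by linarith : (0:ℝ) ≤ 1 - s) (by linarith : (0:ℝ) ≤ t - l)]
    · constructor
      · nlinarith [mul_nonneg (by linarith : (0:ℝ) ≤ 1 - s) (by linarith : (0:ℝ) ≤ l - t)]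
      · nlinarith [mul_nonneg hs0 (by linarith : (0:ℝ) ≤ l - t)]
  have hτmemIoo : ∀ s ∈ Icc (0:ℝ) 1, ∀ t ∈ Ioo (0:ℝ) 1,
      s * t + (1 - s) * l ∈ Ioo (0:ℝ) 1 := by
    rintro s ⟨hs0, hs1⟩ t ⟨ht0, ht1⟩
    rcases le_total l t with hlt | hlt
    · constructor
      · nlinarith [mul_nonneg hs0 (by linarith : (0:ℝ) ≤ t - l)]
      · nlinarith [mul_nonneg (by linarith : (0:ℝ) ≤ 1 - s) (by linarith : (0:ℝ) ≤ t - l)]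
    · constructor
      · nlinarith [mul_nonneg (by linarith : (0:ℝ) ≤ 1 - s) (by linarith : (0:ℝ) ≤ l - t)]
      · nlinarith [mul_nonneg hs0 (by linarith : (0:ℝ) ≤ l - t)]
  -- the weight
  have hw_nonneg : ∀ t ∈ Icc (0:ℝ) 1, 0 ≤ w t := fun t ht =>
    mul_nonneg (Real.rpow_nonneg ht.1 _) (Real.rpow_nonneg (by linarith [ht.2]) _)
  have hw_pos : ∀ t ∈ Ioo (0:ℝ) 1, 0 < w t := fun t ht =>
    mul_pos (Real.rpow_pos_of_pos ht.1 _) (Real.rpow_pos_of_pos (by linarith [ht.2]) _)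
  have hw_int : IntervalIntegrable w volume 0 1 := by
    have h1 : IntervalIntegrable w volume 0 (1/2) := by
      apply (intervalIntegrable_rpow' (by linarith) (a := (0:ℝ)) (b := 1/2)).mul_continuousOn
      apply ContinuousOn.rpow_const
      · exact (continuous_const.sub continuous_id).continuousOn
      · intro t ht
        rw [Set.uIcc_of_le (by norm_num)] at ht
        exact Or.inl (by simp at ht ⊢; linarith [ht.2])
    have h2 : IntervalIntegrable w volume (1/2) 1 := by
      have key : IntervalIntegrable (fun t : ℝ => (1-t) ^ (-l)) volume (1 - 1/2) (1 - 0) :=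
        (intervalIntegrable_rpow' (by linarith) (a := (1/2:ℝ)) (b := 0)).comp_sub_left 1
      norm_num at key
      apply key.continuousOn_mul
      apply ContinuousOn.rpow_const continuous_id.continuousOn
      intro t ht
      rw [Set.uIcc_of_le (by norm_num)] at ht
      exact Or.inl (by simp at ht ⊢; intro hh; rw [hh] at ht; linarith [ht.1])
    exact h1.trans h2
  have hwt_int : IntervalIntegrable (fun t => w t * t) volume 0 1 :=
    hw_int.mul_continuousOn continuous_id.continuousOn
  set W : ℝ := ∫ t in (0:ℝ)..1, w t with hWdef
  have hW_pos : 0 < W :=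
    intervalIntegral_pos_of_pos_on hw_int (fun t ht => hw_pos t ht) one_pos
  -- the first-moment identity ∫ w (l - t) = 0 via FTC
  have hM : ∫ t in (0:ℝ)..1, w t * t = l * W := by
    have h0 : ∫ t in (0:ℝ)..1, w t * (l - t) = 0 := by
      set ψ : ℝ → ℝ := fun t => t ^ l * (1-t) ^ (1-l) with hψ
      have hcont : ContinuousOn ψ (Icc 0 1) := by
        apply ContinuousOn.mul
        · exact continuous_id.continuousOn.rpow_const (fun t _ => Or.inr hl0.le)
        · exact (continuous_const.sub continuous_id).continuousOn.rpow_const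
            (fun t _ => Or.inr (by linarith))
      have hderiv : ∀ t ∈ Ioo (0:ℝ) 1, HasDerivAt ψ (w t * (l - t)) t := by
        intro t ht
        have ht0 : (0:ℝ) < t := ht.1
        have h1t : (0:ℝ) < 1 - t := by linarith [ht.2]
        have d1 : HasDerivAt (fun t : ℝ => t ^ l) (l * t ^ (l-1)) t :=
          Real.hasDerivAt_rpow_const (Or.inl ht0.ne')
        have d2 : HasDerivAt (fun t : ℝ => (1-t) ^ (1-l)) ((1-l) * (1-t) ^ (1-l-1) * (-1)) t := by
          have := (Real.hasDerivAt_rpow_const (p := 1-l) (x := 1-t) (Or.inl h1t.ne')).comp t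
            ((hasDerivAt_id t).const_sub 1)
          exact this
        have := d1.mul d2
        refine this.congr_deriv ?_
        have e1 : t ^ l = t ^ (l-1) * t := by
          rw [← Real.rpow_add_one ht0.ne']; ring_nf
        have e2 : (1-t) ^ (1-l) = (1-t) ^ (-l) * (1-t) := by
          rw [← Real.rpow_add_one h1t.ne']; ring_nf
        have e3 : (1-t) ^ (1-l-1) = (1-t) ^ (-l) := by ring_nf
        rw [hwdef]
        simp only
        rw [e1, e2, e3]; ring
      have hint : IntervalIntegrable (fun t => w t * (l - t)) volume 0 1 :=
        hw_int.mul_continuousOn (by fun_prop)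
      rw [integral_eq_sub_of_hasDerivAt_of_le zero_le_one hcont hderiv hint]
      simp [hψ, Real.zero_rpow hl0.ne', Real.zero_rpow (by linarith : 1 - l ≠ 0)]
    have e : (fun t => w t * (l - t)) = fun t => l * w t - w t * t := by funext t; ring
    rw [e, intervalIntegral.integral_sub (hw_int.const_mul l) hwt_int,
      intervalIntegral.integral_const_mul] at h0
    linarith
  -- integrability of the main integrand
  have hint_h : ∀ s ∈ Icc (0:ℝ) 1,
      IntervalIntegrable (fun t => w t * h (s * t + (1 - s) * l)) volume 0 1 := by
    intro s hs
    rw [intervalIntegrable_iff_integrableOn_Ioc_of_le zero_le_one]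
    have hmeas : AEStronglyMeasurable (fun t => h (s * t + (1 - s) * l))
        (volume.restrict (Ioc (0:ℝ) 1)) := by
      rw [← MeasureTheory.Measure.restrict_congr_set Ioo_ae_eq_Ioc]
      exact (hcontIoo.comp (((continuous_const.mul continuous_id).add
        continuous_const).continuousOn) (fun t ht => hτmemIoo s hs t ht)).aestronglyMeasurable
        measurableSet_Ioo
    have hbound : ∀ᵐ t ∂(volume.restrict (Ioc (0:ℝ) 1)), ‖h (s * t + (1 - s) * l)‖ ≤ C := by
      rw [ae_restrict_iff' measurableSet_Ioc]
      exact ae_of_all _ fun t ht => habs _ (hτmemIcc s hs t ⟨ht.1.le, ht.2⟩)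
    have key := MeasureTheory.Integrable.bdd_mul (c := C)
      ((intervalIntegrable_iff_integrableOn_Ioc_of_le zero_le_one).1 hw_int) hmeas hbound
    exact key.congr (ae_of_all _ fun t => mul_comm _ _)
  -- integral of affine integrands
  have haff_int : ∀ (s A B : ℝ),
      IntervalIntegrable (fun t => w t * (A + B * (s * t + (1 - s) * l))) volume 0 1 :=
    fun s A B => hw_int.mul_continuousOn
      ((by fun_prop : Continuous fun t : ℝ => A + B * (s * t + (1 - s) * l)).continuousOn)
  have haff : ∀ (s A B : ℝ),
      ∫ t in (0:ℝ)..1, w t * (A + B * (s * t + (1 - s) * l)) = (A + B * l) * W := by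
    intro s A B
    have e : (fun t => w t * (A + B * (s * t + (1 - s) * l)))
        = fun t => (A + B * (1 - s) * l) * w t + (B * s) * (w t * t) := by funext t; ring
    rw [e, intervalIntegral.integral_add (hw_int.const_mul _) (hwt_int.const_mul _),
      intervalIntegral.integral_const_mul, intervalIntegral.integral_const_mul, hM, ← hWdef]
    ring
  set F : ℝ → ℝ := fun s => ∫ t in (0:ℝ)..1, w t * h (s * t + (1 - s) * l) with hFdef
  have hFG : ∀ s, funG f g l s x = (Real.sin (π * l) / π) * F s := fun s => rfl
  -- the key lower bound  F s ≥ h l * W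
  have hkey : ∀ s ∈ Icc (0:ℝ) 1, h l * W ≤ F s := by
    intro s hs
    have hll : l ∈ Icc (0:ℝ) 1 := ⟨hl0.le, hl1.le⟩
    have : h l ≤ F s / W := by
      rw [hhS]
      apply csSup_le (hne _)
      rintro r ⟨φ, c₁, c₂, H1, H2, rfl⟩
      rw [le_div_iff₀ hW_pos]
      set A : ℝ := φ x - c₁ with hA
      set B : ℝ := c₁ - c₂ with hB
      have ptwise : ∀ t ∈ Icc (0:ℝ) 1,
          w t * (A + B * (s * t + (1 - s) * l)) ≤ w t * h (s * t + (1 - s) * l) := by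
        intro t ht
        refine mul_le_mul_of_nonneg_left ?_ (hw_nonneg t ht)
        exact hle _ (hτmemIcc s hs t ht) _ ⟨φ, c₁, c₂, H1, H2, by rw [hA, hB]; ring⟩
      have hmono := intervalIntegral.integral_mono_on zero_le_one (haff_int s A B)
        (hint_h s hs) ptwise
      rw [haff s A B] at hmono
      calc (φ x - (1 - l) * c₁ - l * c₂) * W = (A + B * l) * W := by rw [hA, hB]; ring
        _ ≤ F s := hmono
    calc h l * W ≤ (F s / W) * W := mul_le_mul_of_nonneg_right this hW_pos.le
      _ = F s := div_mul_cancel₀ _ hW_pos.ne'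
  have hF0 : F 0 = h l * W := by
    have e : (fun t => w t * h (0 * t + (1 - 0) * l)) = fun t => w t * h l := by
      funext t; norm_num
    rw [hFdef]
    simp only [e]
    rw [intervalIntegral.integral_mul_const, ← hWdef, mul_comm]
  -- convexity of F
  have hFconv : ∀ s₁ ∈ Icc (0:ℝ) 1, ∀ s₂ ∈ Icc (0:ℝ) 1, ∀ a b : ℝ,
      0 ≤ a → 0 ≤ b → a + b = 1 → F (a * s₁ + b * s₂) ≤ a * F s₁ + b * F s₂ := by
    intro s₁ h₁ s₂ h₂ a b ha hb hab
    have hsmem : a * s₁ + b * s₂ ∈ Icc (0:ℝ) 1 := by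
      have := (convex_Icc (0:ℝ) 1) h₁ h₂ ha hb hab
      simpa using this
    have ptwise : ∀ t ∈ Icc (0:ℝ) 1,
        w t * h ((a * s₁ + b * s₂) * t + (1 - (a * s₁ + b * s₂)) * l)
          ≤ a * (w t * h (s₁ * t + (1 - s₁) * l)) + b * (w t * h (s₂ * t + (1 - s₂) * l)) := by
      intro t ht
      have τ1 := hτmemIcc s₁ h₁ t ht
      have τ2 := hτmemIcc s₂ h₂ t ht
      have hcv := hconv.2 τ1 τ2 ha hb hab
      simp only [smul_eq_mul] at hcv
      have e : (a * s₁ + b * s₂) * t + (1 - (a * s₁ + b * s₂)) * l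
          = a * (s₁ * t + (1 - s₁) * l) + b * (s₂ * t + (1 - s₂) * l) := by
        have hb' : b = 1 - a := by linarith
        rw [hb']; ring
      rw [e]
      calc w t * h (a * (s₁ * t + (1 - s₁) * l) + b * (s₂ * t + (1 - s₂) * l))
          ≤ w t * (a * h (s₁ * t + (1 - s₁) * l) + b * h (s₂ * t + (1 - s₂) * l)) :=
            mul_le_mul_of_nonneg_left hcv (hw_nonneg t ht)
        _ = a * (w t * h (s₁ * t + (1 - s₁) * l)) + b * (w t * h (s₂ * t + (1 - s₂) * l)) := by
            ring
    have hmono := intervalIntegral.integral_mono_on zero_le_one (hint_h _ hsmem)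
      (((hint_h s₁ h₁).const_mul a).add ((hint_h s₂ h₂).const_mul b)) ptwise
    rwa [intervalIntegral.integral_add ((hint_h s₁ h₁).const_mul a)
      ((hint_h s₂ h₂).const_mul b), intervalIntegral.integral_const_mul,
      intervalIntegral.integral_const_mul] at hmono
  -- monotonicity of F
  have hFmono : ∀ s₁ ∈ Icc (0:ℝ) 1, ∀ s₂ ∈ Icc (0:ℝ) 1, s₁ ≤ s₂ → F s₁ ≤ F s₂ := by
    intro s₁ h₁ s₂ h₂ h12
    rcases eq_or_lt_of_le h₁.1 with h10 | h1pos
    · rw [← h10, hF0]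
      exact hkey s₂ h₂
    rcases eq_or_lt_of_le h12 with rfl | hlt
    · exact le_refl _
    have hs2pos : 0 < s₂ := lt_trans h1pos hlt
    set θ : ℝ := s₁ / s₂ with hθ
    have hθpos : 0 < θ := div_pos h1pos hs2pos
    have hθ1 : θ ≤ 1 := by
      rw [hθ, div_le_one hs2pos]; exact h12
    have heq : (1 - θ) * 0 + θ * s₂ = s₁ := by
      rw [hθ]; field_simp; ring
    have hcv := hFconv 0 ⟨le_refl 0, zero_le_one⟩ s₂ h₂ (1 - θ) θ (by linarith) hθpos.le
      (by ring)
    rw [heq] at hcv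
    have F0le : F 0 ≤ F s₁ := by rw [hF0]; exact hkey s₁ h₁
    have h1 : θ * F s₁ ≤ θ * F s₂ := by
      nlinarith [mul_nonneg (sub_nonneg.2 F0le) (by linarith : (0:ℝ) ≤ 1 - θ)]
    exact le_of_mul_le_mul_left h1 hθpos
  -- the constant is nonnegative
  have hc0 : 0 ≤ Real.sin (π * l) / π := by
    apply div_nonneg _ Real.pi_pos.le
    apply Real.sin_nonneg_of_nonneg_of_le_pi (by positivity)
    nlinarith [Real.pi_pos]
  constructor
  · refine ⟨convex_Icc 0 1, ?_⟩
    intro s₁ h₁ s₂ h₂ a b ha hb hab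
    simp only [smul_eq_mul, hFG]
    have hcv := hFconv s₁ h₁ s₂ h₂ a b ha hb hab
    calc Real.sin (π * l) / π * F (a * s₁ + b * s₂)
        ≤ Real.sin (π * l) / π * (a * F s₁ + b * F s₂) :=
          mul_le_mul_of_nonneg_left hcv hc0
      _ = a * (Real.sin (π * l) / π * F s₁) + b * (Real.sin (π * l) / π * F s₂) := by ring
  · intro s₁ h₁ s₂ h₂ h12
    simp only [hFG]
    exact mul_le_mul_of_nonneg_left (hFmono s₁ h₁ s₂ h₂ h12) hc0
end
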